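/- arXiv:2404.02133 — 5 statements merged into one kernel-verified Lean document; each statement's English description precedes it below -/
import Mathlib

section
/- Let n ≥ 1 be an integer and let (c_k)_{k∈ℤ} be complex numbers with c_k = 0 for |k| ≤ n and S = ∑_{k∈ℤ} |c_k|² < ∞. Define U(r,θ) = ∑_{k∈ℤ} c_k r^{|k|} e^{ikθ} for 0 ≤ r < 1. Then for every 0 < r < 1 and every θ, |∂_r U(r,θ)|² + r^{−2}|∂_θ U(r,θ)|² ≤ 4(n+1)² · r^{2n} · (1−r)^{−3} · S. -/
lemma normexp (k : ℤ) (t : ℝ) : ‖Complex.exp ((k:ℂ) * t * Complex.I)‖ = 1 := by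
  rw [Complex.norm_exp]
  have : ((k:ℂ) * t * Complex.I).re = 0 := by
    simp [Complex.mul_re, Complex.mul_im]
  rw [this, Real.exp_zero]

lemma summable_aux {ρ : ℝ} (h0 : 0 < ρ) (h1 : ρ < 1) :
    Summable (fun j : ℕ => ((j:ℝ) * ρ^(j-1))^2) := by
  have h2 : ‖ρ^2‖ < 1 := by
    rw [Real.norm_eq_abs, _root_.abs_of_nonneg (sq_nonneg ρ)]
    nlinarith
  have hs := (summable_pow_mul_geometric_of_norm_lt_one (R := ℝ) 2 h2).mul_left (ρ^2)⁻¹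
  apply hs.of_nonneg_of_le (fun j => sq_nonneg _)
  intro j
  cases j with
  | zero => simp
  | succ m =>
    have e1 : ((m+1:ℕ):ℝ) * ρ^(m+1-1) = ((m+1:ℕ):ℝ) * ρ^m := by norm_num
    have e2 : (ρ^2)⁻¹ * (((m+1:ℕ):ℝ)^2 * (ρ^2)^(m+1)) = ((m+1:ℕ):ℝ)^2 * (ρ^2)^m := by
      rw [pow_succ]; field_simp; ring
    rw [e1, e2, mul_pow, ← pow_mul, ← pow_mul, mul_comm m 2]


lemma negAbs (j : ℕ) : ((-(j+1:ℤ)).natAbs) = j+1 := by omega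

lemma summable_natAbs {h : ℕ → ℝ} (hs : Summable h) :
    Summable (fun k : ℤ => h k.natAbs) := by
  apply Summable.of_nat_of_neg_add_one (f := fun k : ℤ => h k.natAbs)
  · simpa only [Int.natAbs_natCast] using hs
  · simp only [negAbs]
    exact (summable_nat_add_iff 1).2 hs

lemma tsum_natAbs {h : ℕ → ℝ} (h0 : h 0 = 0) (hs : Summable h) :
    ∑' k : ℤ, h k.natAbs = 2 * ∑' j : ℕ, h j := by
  have h1 : HasSum (fun j : ℕ => h ((j:ℤ).natAbs)) (∑' j, h j) := by
    simpa only [Int.natAbs_natCast] using hs.hasSum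
  have h2 : HasSum (fun j : ℕ => h ((-(j+1:ℤ)).natAbs)) (∑' j, h j) := by
    simp only [negAbs]
    apply (hasSum_nat_add_iff 1).mpr
    simpa [h0] using hs.hasSum
  have := HasSum.of_nat_of_neg_add_one (f := fun k : ℤ => h k.natAbs) h1 h2
  rw [this.tsum_eq]; ring

lemma tsum_cs {f g : ℤ → ℝ} (hf0 : ∀ k, 0 ≤ f k) (hg0 : ∀ k, 0 ≤ g k)
    (hf : Summable fun k => f k ^ 2) (hg : Summable fun k => g k ^ 2) :
    (∑' k, f k * g k) ^ 2 ≤ (∑' k, f k ^ 2) * ∑' k, g k ^ 2 := by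
  set S := ∑' k, f k ^ 2 with hS
  set T := ∑' k, g k ^ 2 with hT
  have hSnn : 0 ≤ S := tsum_nonneg fun k => sq_nonneg _
  have hTnn : 0 ≤ T := tsum_nonneg fun k => sq_nonneg _
  have hsum : Summable fun k => f k * g k := by
    apply ((hf.add hg).div_const 2).of_nonneg_of_le
      (fun k => mul_nonneg (hf0 k) (hg0 k))
    intro k
    nlinarith [sq_nonneg (f k - g k)]
  have key : ∑' k, f k * g k ≤ Real.sqrt S * Real.sqrt T := by
    apply Summable.tsum_le_of_sum_le hsum
    intro s
    have h1 : (∑ i ∈ s, f i * g i) ^ 2 ≤ (∑ i ∈ s, f i ^ 2) * ∑ i ∈ s, g i ^ 2 :=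
      Finset.sum_mul_sq_le_sq_mul_sq s f g
    have h2 : (∑ i ∈ s, f i ^ 2) ≤ S := Summable.sum_le_tsum s (fun i _ => sq_nonneg _) hf
    have h3 : (∑ i ∈ s, g i ^ 2) ≤ T := Summable.sum_le_tsum s (fun i _ => sq_nonneg _) hg
    have h4 : 0 ≤ ∑ i ∈ s, f i * g i :=
      Finset.sum_nonneg fun i _ => mul_nonneg (hf0 i) (hg0 i)
    rw [← Real.sqrt_mul hSnn]
    apply (Real.le_sqrt h4 (mul_nonneg hSnn hTnn)).2
    calc (∑ i ∈ s, f i * g i) ^ 2 ≤ (∑ i ∈ s, f i ^ 2) * ∑ i ∈ s, g i ^ 2 := h1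
      _ ≤ S * T :=
          mul_le_mul h2 h3 (Finset.sum_nonneg fun i _ => sq_nonneg _) hSnn
  calc (∑' k, f k * g k)^2 ≤ (Real.sqrt S * Real.sqrt T)^2 := by
        apply pow_le_pow_left₀ (tsum_nonneg fun k => mul_nonneg (hf0 k) (hg0 k)) key
    _ = S * T := by
        rw [mul_pow, Real.sq_sqrt hSnn, Real.sq_sqrt hTnn]

lemma choose_sum {y : ℝ} (hy0 : 0 ≤ y) (hy1 : y < 1) :
    HasSum (fun i : ℕ => ((i:ℝ)+1)*((i:ℝ)+2)*y^i) (2/(1-y)^3) := by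
  have hy : ‖y‖ < 1 := by rw [Real.norm_eq_abs, abs_of_nonneg hy0]; exact hy1
  have h := (hasSum_choose_mul_geometric_of_norm_lt_one (𝕜 := ℝ) 2 hy).mul_left 2
  have e : ∀ i : ℕ, 2 * (((i+2).choose 2 : ℝ) * y^i) = ((i:ℝ)+1)*((i:ℝ)+2)*y^i := by
    intro i
    have hd : 2 ∣ (i+2)*(i+1) := by
      rw [Nat.mul_comm]
      exact (Nat.even_mul_succ_self (i+1)).two_dvd
    have hnat : 2 * ((i+2).choose 2) = (i+1)*(i+2) := by
      rw [Nat.choose_two_right]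
      have h21 : i + 2 - 1 = i + 1 := by omega
      rw [h21, Nat.mul_div_cancel' hd, Nat.mul_comm]
    have : (2:ℝ) * ((i+2).choose 2 : ℝ) = ((i:ℝ)+1)*((i:ℝ)+2) := by
      have := congrArg (fun m : ℕ => (m:ℝ)) hnat
      push_cast at this
      linarith [this]
    rw [← mul_assoc, this]
  have e2 : (2 : ℝ) * (1/(1-y)^3) = 2/(1-y)^3 := by ring
  rw [funext e, e2] at h
  exact h

lemma sum_main {r : ℝ} (hr0 : 0 < r) (hr1 : r < 1) (n : ℕ) (hn : 1 ≤ n) :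
    ∑' k : ℤ, (if n < k.natAbs then (k.natAbs:ℝ) * r^(k.natAbs - 1) else 0)^2
      ≤ 2 * ((n:ℝ)+1)^2 * r^(2*n) * ((1-r)^3)⁻¹ := by
  set y := r^2 with hy
  have hy0 : 0 ≤ y := sq_nonneg r
  have hy1 : y < 1 := by nlinarith
  set Gn : ℕ → ℝ := fun j => (if n < j then (j:ℝ)*r^(j-1) else 0)^2 with hGn
  have hGn_le : ∀ j, Gn j ≤ ((j:ℝ) * r^(j-1))^2 := by
    intro j
    by_cases h : n < j <;> simp [hGn, h, sq_nonneg]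
  have hGn_nonneg : ∀ j, 0 ≤ Gn j := fun j => sq_nonneg _
  have hGn_sum : Summable Gn :=
    (summable_aux hr0 hr1).of_nonneg_of_le hGn_nonneg hGn_le
  have h0 : Gn 0 = 0 := by simp [hGn, Nat.not_lt.2 (Nat.zero_le n)]
  have hint : ∑' k : ℤ, (if n < k.natAbs then (k.natAbs:ℝ) * r^(k.natAbs - 1) else 0)^2
      = 2 * ∑' j : ℕ, Gn j := tsum_natAbs h0 hGn_sum
  rw [hint]
  -- shifted sum
  have hshift_sum : Summable fun i : ℕ => Gn (i + (n+1)) :=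
    (summable_nat_add_iff (n+1)).2 hGn_sum
  have hmaj := (choose_sum hy0 hy1).mul_left (((n:ℝ)+1)^2/2 * y^n)
  have hshift_le : ∀ i : ℕ, Gn (i + (n+1))
      ≤ ((n:ℝ)+1)^2/2 * y^n * (((i:ℝ)+1)*((i:ℝ)+2)*y^i) := by
    intro i
    have hcond : n < i + (n+1) := by omega
    have hsub : i + (n+1) - 1 = i + n := by omega
    have hcast : ((i + (n+1) : ℕ):ℝ) = (i:ℝ) + (n:ℝ) + 1 := by push_cast; ring
    rw [hGn]
    simp only [hcond, if_pos, hsub, hcast]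
    have hpow : (r^(i+n))^2 = y^i * y^n := by
      rw [hy]; ring
    rw [mul_pow, hpow]
    have hN : (1:ℝ) ≤ (n:ℝ) := by exact_mod_cast hn
    have hI : (0:ℝ) ≤ (i:ℝ) := Nat.cast_nonneg i
    have hkey : 2 * ((i:ℝ) + (n:ℝ) + 1)^2 ≤ ((n:ℝ)+1)^2 * (((i:ℝ)+1)*((i:ℝ)+2)) := by
      nlinarith [mul_nonneg hI hI, mul_nonneg (mul_nonneg hI hI) (sub_nonneg.2 hN),
        mul_nonneg hI (sub_nonneg.2 hN)]
    have hyy : 0 ≤ y^i * y^n := mul_nonneg (pow_nonneg hy0 i) (pow_nonneg hy0 n)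
    nlinarith [mul_le_mul_of_nonneg_right hkey hyy]
  have htsum_shift : ∑' i : ℕ, Gn (i + (n+1))
      ≤ ((n:ℝ)+1)^2/2 * y^n * (2/(1-y)^3) := by
    have := Summable.tsum_le_tsum hshift_le hshift_sum hmaj.summable
    rwa [hmaj.tsum_eq] at this
  have hrange : ∑ j ∈ Finset.range (n+1), Gn j = 0 := by
    apply Finset.sum_eq_zero
    intro j hj
    simp only [Finset.mem_range] at hj
    simp [hGn, Nat.not_lt.2 (by omega : j ≤ n)]
  have htot : ∑' j : ℕ, Gn j = ∑' i : ℕ, Gn (i + (n+1)) := by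
    rw [← Summable.sum_add_tsum_nat_add (n+1) hGn_sum, hrange, zero_add]
  rw [htot]
  have hfin : ((n:ℝ)+1)^2/2 * y^n * (2/(1-y)^3) ≤ ((n:ℝ)+1)^2 * r^(2*n) * ((1-r)^3)⁻¹ := by
    have hyn : y^n = r^(2*n) := by rw [hy, ← pow_mul, mul_comm]
    have hd : (0:ℝ) < (1-r)^3 := pow_pos (by linarith) 3
    have hd2 : (0:ℝ) < (1-y)^3 := pow_pos (by linarith) 3
    have hle : (1-r)^3 ≤ (1-y)^3 := by
      apply pow_le_pow_left₀ (by linarith) (by nlinarith)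
    have : (1/(1-y)^3) ≤ ((1-r)^3)⁻¹ := by
      rw [one_div]
      exact inv_anti₀ hd hle
    rw [hyn]
    calc ((n:ℝ)+1)^2/2 * r^(2*n) * (2/(1-y)^3)
        = ((n:ℝ)+1)^2 * r^(2*n) * (1/(1-y)^3) := by ring
      _ ≤ ((n:ℝ)+1)^2 * r^(2*n) * ((1-r)^3)⁻¹ := by
          apply mul_le_mul_of_nonneg_left this (by positivity)
  calc 2 * ∑' i : ℕ, Gn (i + (n+1)) ≤ 2 * (((n:ℝ)+1)^2/2 * y^n * (2/(1-y)^3)) := by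
        linarith
    _ ≤ 2 * (((n:ℝ)+1)^2 * r^(2*n) * ((1-r)^3)⁻¹) := by linarith
    _ = 2 * ((n:ℝ)+1)^2 * r^(2*n) * ((1-r)^3)⁻¹ := by ring


lemma normint (k : ℤ) : ‖(k:ℂ)‖ = (k.natAbs : ℝ) := by
  rw [Complex.norm_intCast, ← Int.cast_abs, Int.abs_eq_natAbs, Int.cast_natCast]

lemma normterm2 (a : ℂ) (k : ℤ) (rr t : ℝ) (hrr : 0 ≤ rr) :
    ‖a * (rr:ℂ)^(k.natAbs) * (Complex.exp ((k:ℂ)*t*Complex.I) * ((k:ℂ) * 1 * Complex.I))‖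
      = ‖a‖ * (rr^(k.natAbs) * (k.natAbs : ℝ)) := by
  rw [norm_mul, norm_mul, norm_mul, normexp, one_mul, mul_one, norm_mul,
    Complex.norm_I, mul_one, norm_pow, Complex.norm_real, Real.norm_eq_abs,
    abs_of_nonneg hrr]
  rw [normint]; ring

open MeasureTheory

noncomputable section
set_option maxHeartbeats 2000000 in

theorem stmt7 (n : ℕ) (hn : 1 ≤ n) (c : ℤ → ℂ)
    (hc0 : ∀ k : ℤ, k.natAbs ≤ n → c k = 0)
    (hc : Summable fun k : ℤ => ‖c k‖ ^ 2)
    (U : ℝ → ℝ → ℂ)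
    (hU : ∀ r θ : ℝ, U r θ =
      ∑' k : ℤ, c k * (r : ℂ) ^ k.natAbs * Complex.exp ((k : ℂ) * θ * Complex.I))
    (r θ : ℝ) (hr0 : 0 < r) (hr1 : r < 1) :
    ‖deriv (fun s : ℝ => U s θ) r‖ ^ 2 + ‖deriv (fun t : ℝ => U r t) θ‖ ^ 2 / r ^ 2
      ≤ 4 * ((n : ℝ) + 1) ^ 2 * r ^ (2 * n) * ((1 - r) ^ 3)⁻¹ * ∑' k : ℤ, ‖c k‖ ^ 2 := by
  have hrabs : |r| = r := abs_of_pos hr0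
  set ρ : ℝ := (1 + r) / 2 with hρdef
  have hρ0 : 0 < ρ := by positivity
  have hρ1 : ρ < 1 := by rw [hρdef]; linarith
  have hrρ : r < ρ := by rw [hρdef]; linarith
  -- the weight function
  set G : ℤ → ℝ := fun k => if n < k.natAbs then (k.natAbs:ℝ) * r^(k.natAbs - 1) else 0
    with hGdef
  have hGnonneg : ∀ k, 0 ≤ G k := by
    intro k
    by_cases h : n < k.natAbs
    · simp only [hGdef, h, if_true]; positivity
    · simp only [hGdef, h, if_false]; exact le_refl 0
  have hG2sum : Summable fun k => G k ^ 2 := by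
    apply (summable_natAbs (summable_aux hr0 hr1)).of_nonneg_of_le (fun k => sq_nonneg _)
    intro k
    by_cases h : n < k.natAbs
    · simp only [hGdef, h, if_true]; exact le_refl _
    · simp only [hGdef, h, if_false]
      rw [zero_pow (by norm_num : (2:ℕ) ≠ 0)]
      positivity
  have hG2 : ∑' k : ℤ, G k ^ 2 ≤ 2 * ((n:ℝ)+1)^2 * r^(2*n) * ((1-r)^3)⁻¹ :=
    sum_main hr0 hr1 n hn
  set S : ℝ := ∑' k : ℤ, ‖c k‖ ^ 2 with hSdef
  have hSnn : 0 ≤ S := tsum_nonneg fun k => sq_nonneg _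
  -- summability of the cross terms
  have hcGsum : Summable fun k : ℤ => ‖c k‖ * G k := by
    apply ((hc.add hG2sum).div_const 2).of_nonneg_of_le
      (fun k => mul_nonneg (norm_nonneg _) (hGnonneg k))
    intro k
    nlinarith [sq_nonneg (‖c k‖ - G k), hGnonneg k, norm_nonneg (c k)]
  set B : ℝ := ∑' k : ℤ, ‖c k‖ * G k with hBdef
  have hBnn : 0 ≤ B := tsum_nonneg fun k => mul_nonneg (norm_nonneg _) (hGnonneg k)
  have hCS : B ^ 2 ≤ S * ∑' k : ℤ, G k ^ 2 :=
    tsum_cs (fun k => norm_nonneg _) hGnonneg hc hG2sum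
  have hBbound : B ^ 2 ≤ S * (2 * ((n:ℝ)+1)^2 * r^(2*n) * ((1-r)^3)⁻¹) :=
    hCS.trans (mul_le_mul_of_nonneg_left hG2 hSnn)
  -- summability at the base point
  have hgeom : Summable fun k : ℤ => ((r^2)^(k.natAbs) : ℝ) := by
    apply summable_natAbs
    exact summable_geometric_of_lt_one (by positivity) (by nlinarith)
  have hbase : ∀ t : ℝ, Summable fun k : ℤ =>
      c k * (r:ℂ)^(k.natAbs) * Complex.exp ((k:ℂ) * t * Complex.I) := by
    intro t
    apply Summable.of_norm
    apply ((hc.add hgeom).div_const 2).of_nonneg_of_le (fun k => norm_nonneg _)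
    intro k
    have he : ‖c k * (r:ℂ)^(k.natAbs) * Complex.exp ((k:ℂ) * t * Complex.I)‖
        = ‖c k‖ * r^(k.natAbs) := by
      rw [norm_mul, norm_mul, normexp, mul_one, norm_pow, Complex.norm_real,
        Real.norm_eq_abs, hrabs]
    rw [he]
    have h2 : (r^(k.natAbs))^2 = (r^2)^(k.natAbs) := by rw [← pow_mul, ← pow_mul, mul_comm]
    nlinarith [sq_nonneg (‖c k‖ - r^(k.natAbs)), norm_nonneg (c k),
      pow_nonneg hr0.le (k.natAbs)]
  -- Part A : radial derivative
  have hderivR : deriv (fun s : ℝ => U s θ) r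
      = ∑' k : ℤ, c k * ((k.natAbs : ℂ) * (r:ℂ)^(k.natAbs - 1))
          * Complex.exp ((k:ℂ) * θ * Complex.I) := by
    have hUs : (fun s : ℝ => U s θ)
        = fun s : ℝ => ∑' k : ℤ, c k * (s:ℂ)^(k.natAbs)
            * Complex.exp ((k:ℂ) * θ * Complex.I) := funext fun s => hU s θ
    rw [hUs]
    have hu : Summable fun k : ℤ => ‖c k‖ * ((k.natAbs : ℝ) * ρ^(k.natAbs - 1)) := by
      have hw2 : Summable fun k : ℤ => ((k.natAbs : ℝ) * ρ^(k.natAbs - 1))^2 :=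
        summable_natAbs (summable_aux hρ0 hρ1)
      apply ((hc.add hw2).div_const 2).of_nonneg_of_le
        (fun k => mul_nonneg (norm_nonneg _) (by positivity))
      intro k
      nlinarith [sq_nonneg (‖c k‖ - (k.natAbs : ℝ) * ρ^(k.natAbs - 1)), norm_nonneg (c k),
        mul_nonneg (Nat.cast_nonneg (α := ℝ) k.natAbs) (pow_nonneg hρ0.le (k.natAbs - 1))]
    have hD := hasDerivAt_tsum_of_isPreconnected hu (isOpen_Ioo (a := -ρ) (b := ρ))
      (isPreconnected_Ioo)
      (g := fun (k : ℤ) (s : ℝ) => c k * (s:ℂ)^(k.natAbs)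
          * Complex.exp ((k:ℂ) * θ * Complex.I))
      (g' := fun (k : ℤ) (s : ℝ) => c k * ((k.natAbs : ℂ) * (s:ℂ)^(k.natAbs - 1))
          * Complex.exp ((k:ℂ) * θ * Complex.I))
      (fun k s _ => by
        have h1 : HasDerivAt (fun z : ℂ => z ^ (k.natAbs))
            ((k.natAbs : ℂ) * (s:ℂ)^(k.natAbs - 1)) (s:ℂ) := hasDerivAt_pow _ _
        exact (HasDerivAt.const_mul (c k) h1.comp_ofReal).mul_const _)
      (fun k s hs => by
        have habs : |s| ≤ ρ := by
          rw [abs_le]; exact ⟨hs.1.le, hs.2.le⟩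
        have he : ‖c k * ((k.natAbs : ℂ) * (s:ℂ)^(k.natAbs - 1))
            * Complex.exp ((k:ℂ) * θ * Complex.I)‖
            = ‖c k‖ * ((k.natAbs : ℝ) * |s|^(k.natAbs - 1)) := by
          rw [norm_mul, norm_mul, normexp, mul_one, norm_mul, norm_pow,
            Complex.norm_natCast, Complex.norm_real, Real.norm_eq_abs]
        rw [he]
        apply mul_le_mul_of_nonneg_left _ (norm_nonneg _)
        apply mul_le_mul_of_nonneg_left _ (Nat.cast_nonneg _)
        exact pow_le_pow_left₀ (abs_nonneg s) habs _)
      (Set.mem_Ioo.mpr ⟨by linarith, hrρ⟩)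
      (hbase θ)
      (Set.mem_Ioo.mpr ⟨by linarith, hrρ⟩)
    exact hD.deriv
  -- per-term norm identity for radial derivative
  have hnormR : ∀ k : ℤ, ‖c k * ((k.natAbs : ℂ) * (r:ℂ)^(k.natAbs - 1))
      * Complex.exp ((k:ℂ) * θ * Complex.I)‖ = ‖c k‖ * G k := by
    intro k
    by_cases h : n < k.natAbs
    · rw [norm_mul, norm_mul, normexp, mul_one, norm_mul, norm_pow,
        Complex.norm_natCast, Complex.norm_real, Real.norm_eq_abs, hrabs]
      simp only [hGdef, h, if_true]
    · have : c k = 0 := hc0 k (Nat.not_lt.mp h)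
      simp [this, hGdef, h]
  have hRnorm : ‖deriv (fun s : ℝ => U s θ) r‖ ≤ B := by
    rw [hderivR]
    calc ‖∑' k : ℤ, c k * ((k.natAbs : ℂ) * (r:ℂ)^(k.natAbs - 1))
          * Complex.exp ((k:ℂ) * θ * Complex.I)‖
        ≤ ∑' k : ℤ, ‖c k * ((k.natAbs : ℂ) * (r:ℂ)^(k.natAbs - 1))
          * Complex.exp ((k:ℂ) * θ * Complex.I)‖ := by
          apply norm_tsum_le_tsum_norm
          simpa only [funext hnormR] using hcGsum
      _ = B := by rw [hBdef]; exact tsum_congr hnormR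
  -- Part B : angular derivative
  have hderivT : deriv (fun t : ℝ => U r t) θ
      = ∑' k : ℤ, c k * (r:ℂ)^(k.natAbs)
          * (Complex.exp ((k:ℂ) * θ * Complex.I) * ((k:ℂ) * 1 * Complex.I)) := by
    have hUt : (fun t : ℝ => U r t)
        = fun t : ℝ => ∑' k : ℤ, c k * (r:ℂ)^(k.natAbs)
            * Complex.exp ((k:ℂ) * t * Complex.I) := funext fun t => hU r t
    rw [hUt]
    have hu : Summable fun k : ℤ => ‖c k‖ * ((k.natAbs : ℝ) * r^(k.natAbs - 1)) := by
      have hw2 : Summable fun k : ℤ => ((k.natAbs : ℝ) * r^(k.natAbs - 1))^2 :=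
        summable_natAbs (summable_aux hr0 hr1)
      apply ((hc.add hw2).div_const 2).of_nonneg_of_le
        (fun k => mul_nonneg (norm_nonneg _) (by positivity))
      intro k
      nlinarith [sq_nonneg (‖c k‖ - (k.natAbs : ℝ) * r^(k.natAbs - 1)), norm_nonneg (c k),
        mul_nonneg (Nat.cast_nonneg (α := ℝ) k.natAbs) (pow_nonneg hr0.le (k.natAbs - 1))]
    have hD := hasDerivAt_tsum hu
      (g := fun (k : ℤ) (t : ℝ) => c k * (r:ℂ)^(k.natAbs)
          * Complex.exp ((k:ℂ) * t * Complex.I))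
      (g' := fun (k : ℤ) (t : ℝ) => c k * (r:ℂ)^(k.natAbs)
          * (Complex.exp ((k:ℂ) * t * Complex.I) * ((k:ℂ) * 1 * Complex.I)))
      (fun k t => by
        have h1 : HasDerivAt (fun z : ℂ => (k:ℂ) * z * Complex.I)
            ((k:ℂ) * 1 * Complex.I) (t:ℂ) :=
          ((hasDerivAt_id (t:ℂ)).const_mul (k:ℂ)).mul_const Complex.I
        have h2 := h1.cexp
        exact HasDerivAt.const_mul (c k * (r:ℂ)^(k.natAbs)) h2.comp_ofReal)
      (fun k t => by
        have he : ‖c k * (r:ℂ)^(k.natAbs)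
            * (Complex.exp ((k:ℂ) * t * Complex.I) * ((k:ℂ) * 1 * Complex.I))‖
            = ‖c k‖ * (r^(k.natAbs) * (k.natAbs : ℝ)) := normterm2 _ _ _ _ hr0.le
        rw [he]
        apply mul_le_mul_of_nonneg_left _ (norm_nonneg _)
        rw [mul_comm (r^(k.natAbs))]
        apply mul_le_mul_of_nonneg_left _ (Nat.cast_nonneg _)
        rcases Nat.eq_zero_or_pos k.natAbs with h | h
        · simp [h]
        · calc r^(k.natAbs) = r^(k.natAbs - 1) * r := by
                rw [← pow_succ]; congr 1; omega
            _ ≤ r^(k.natAbs - 1) * 1 := by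
                apply mul_le_mul_of_nonneg_left hr1.le (pow_nonneg hr0.le _)
            _ = r^(k.natAbs - 1) := mul_one _)
      (hbase 0)
      θ
    exact hD.deriv
  -- per-term norm identity for angular derivative
  have hnormT : ∀ k : ℤ, ‖c k * (r:ℂ)^(k.natAbs)
      * (Complex.exp ((k:ℂ) * θ * Complex.I) * ((k:ℂ) * 1 * Complex.I))‖
      = r * (‖c k‖ * G k) := by
    intro k
    by_cases h : n < k.natAbs
    · have hk1 : 1 ≤ k.natAbs := by omega
      have he : ‖c k * (r:ℂ)^(k.natAbs)
          * (Complex.exp ((k:ℂ) * θ * Complex.I) * ((k:ℂ) * 1 * Complex.I))‖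
          = ‖c k‖ * (r^(k.natAbs) * (k.natAbs : ℝ)) := normterm2 _ _ _ _ hr0.le
      rw [he]
      simp only [hGdef, h, if_true]
      have : r^(k.natAbs) = r * r^(k.natAbs - 1) := by
        rw [← pow_succ']; congr 1; omega
      rw [this]; ring
    · have : c k = 0 := hc0 k (Nat.not_lt.mp h)
      simp [this]
  have hTnorm : ‖deriv (fun t : ℝ => U r t) θ‖ ≤ r * B := by
    rw [hderivT]
    calc ‖∑' k : ℤ, c k * (r:ℂ)^(k.natAbs)
          * (Complex.exp ((k:ℂ) * θ * Complex.I) * ((k:ℂ) * 1 * Complex.I))‖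
        ≤ ∑' k : ℤ, ‖c k * (r:ℂ)^(k.natAbs)
          * (Complex.exp ((k:ℂ) * θ * Complex.I) * ((k:ℂ) * 1 * Complex.I))‖ := by
          apply norm_tsum_le_tsum_norm
          simpa only [funext hnormT] using hcGsum.mul_left r
      _ = r * B := by
          rw [hBdef, ← tsum_mul_left]
          exact tsum_congr hnormT
  -- conclusion
  have hR2 : ‖deriv (fun s : ℝ => U s θ) r‖ ^ 2 ≤ B ^ 2 :=
    pow_le_pow_left₀ (norm_nonneg _) hRnorm 2
  have hT2 : ‖deriv (fun t : ℝ => U r t) θ‖ ^ 2 / r ^ 2 ≤ B ^ 2 := by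
    have h1 : ‖deriv (fun t : ℝ => U r t) θ‖ ^ 2 ≤ (r * B) ^ 2 :=
      pow_le_pow_left₀ (norm_nonneg _) hTnorm 2
    have h2 : (r * B)^2 = r^2 * B^2 := by ring
    rw [div_le_iff₀ (by positivity)]
    calc ‖deriv (fun t : ℝ => U r t) θ‖ ^ 2 ≤ (r * B)^2 := h1
      _ = B^2 * r^2 := by ring
  calc ‖deriv (fun s : ℝ => U s θ) r‖ ^ 2 + ‖deriv (fun t : ℝ => U r t) θ‖ ^ 2 / r ^ 2
      ≤ B^2 + B^2 := add_le_add hR2 hT2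
    _ = 2 * B^2 := by ring
    _ ≤ 2 * (S * (2 * ((n:ℝ)+1)^2 * r^(2*n) * ((1-r)^3)⁻¹)) := by linarith
    _ = 4 * ((n:ℝ)+1)^2 * r^(2*n) * ((1-r)^3)⁻¹ * S := by ring
end
end

section
/- For every integer ℓ ≥ 1 there exists a constant C_ℓ > 0 such that the following holds. Let n ≥ 1 be an integer and let (c_k)_{k∈ℤ} be complex numbers with c_k = 0 for |k| ≤ n and S = ∑_{k∈ℤ} |c_k|² < ∞, and define U(r,θ) = ∑_{k∈ℤ} c_k r^{|k|} e^{ikθ}. Then for every θ, the map r ↦ U(r,θ) is ℓ-times differentiable on (0,1) and |∂_r^ℓ U(r,θ)| ≤ C_ℓ · n^ℓ · r^{n+1−ℓ} · (1−r)^{−(ℓ+1/2)} · √S for all 0 < r < 1. -/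
open MeasureTheory

noncomputable section

namespace Stmt8Aux

open Set Finset

/-- Cauchy-Schwarz for tsums of nonnegative reals. -/
lemma tsum_cs {ι : Type*} (f g : ι → ℝ) (h0f : ∀ i, 0 ≤ f i) (h0g : ∀ i, 0 ≤ g i)
    (hf : Summable fun i => f i ^ 2) (hg : Summable fun i => g i ^ 2) :
    ∑' i, f i * g i ≤ Real.sqrt (∑' i, f i ^ 2) * Real.sqrt (∑' i, g i ^ 2) := by
  have hfg : Summable fun i => f i * g i := by
    refine (hf.add hg).of_nonneg_of_le (fun i => mul_nonneg (h0f i) (h0g i)) (fun i => ?_)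
    nlinarith [sq_nonneg (f i - g i), sq_nonneg (f i), sq_nonneg (g i)]
  refine Summable.tsum_le_of_sum_le hfg (fun s => ?_)
  have h1 : (∑ i ∈ s, f i * g i) ^ 2 ≤ (∑ i ∈ s, f i ^ 2) * (∑ i ∈ s, g i ^ 2) :=
    Finset.sum_mul_sq_le_sq_mul_sq s f g
  have h2 : ∑ i ∈ s, f i * g i ≤ Real.sqrt ((∑ i ∈ s, f i ^ 2) * (∑ i ∈ s, g i ^ 2)) := by
    rw [show (∑ i ∈ s, f i ^ 2) * (∑ i ∈ s, g i ^ 2) =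
      (Real.sqrt ((∑ i ∈ s, f i ^ 2) * (∑ i ∈ s, g i ^ 2))) ^ 2 from
        (Real.sq_sqrt (by positivity)).symm] at h1
    have hnn : (0:ℝ) ≤ ∑ i ∈ s, f i * g i :=
      Finset.sum_nonneg (fun i _ => mul_nonneg (h0f i) (h0g i))
    nlinarith [Real.sqrt_nonneg ((∑ i ∈ s, f i ^ 2) * (∑ i ∈ s, g i ^ 2))]
  refine h2.trans ?_
  rw [Real.sqrt_mul (Finset.sum_nonneg (fun i _ => sq_nonneg (f i)))]
  gcongr
  · exact Summable.sum_le_tsum s (fun i _ => sq_nonneg (f i)) hf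
  · exact Summable.sum_le_tsum s (fun i _ => sq_nonneg (g i)) hg

lemma pow_le_descFactorial (d j : ℕ) : (j + 1) ^ d ≤ (j + d).descFactorial d := by
  induction d with
  | zero => simp
  | succ d ih =>
      have h1 : (j + (d+1)).descFactorial (d+1) = (j + 1) * (j + d + 1).descFactorial d := by
        rw [show j + (d+1) = (j + d + 1) by ring, Nat.descFactorial_succ]
        congr 1
        omega
      rw [h1, pow_succ, mul_comm ((j+1)^d) (j+1)]
      exact Nat.mul_le_mul_left _ (ih.trans (Nat.descFactorial_le d (by omega)))

lemma summable_polygeom (d : ℕ) {x : ℝ} (h0 : 0 ≤ x) (h1 : x < 1) :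
    Summable (fun j : ℕ => ((j : ℝ) + 1) ^ d * x ^ j) := by
  have hb : ∀ j : ℕ, 0 ≤ ((j : ℝ) + 1) ^ d * x ^ j := fun j => by positivity
  refine Summable.of_nonneg_of_le hb (fun j => ?_)
    (((summable_choose_mul_geometric_of_norm_lt_one d
      (r := x) (by rwa [Real.norm_eq_abs, abs_of_nonneg h0])).mul_left (d.factorial : ℝ)))
  have hnat : ((j:ℝ) + 1) ^ d ≤ (d.factorial : ℝ) * ((j + d).choose d : ℝ) := by
    have := pow_le_descFactorial d j
    rw [Nat.descFactorial_eq_factorial_mul_choose] at this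
    calc ((j:ℝ) + 1) ^ d = (((j+1)^d : ℕ) : ℝ) := by push_cast; ring
      _ ≤ ((d.factorial * (j+d).choose d : ℕ) : ℝ) := by exact_mod_cast Nat.cast_le.mpr this
      _ = _ := by push_cast; ring
  calc ((j:ℝ)+1)^d * x^j ≤ ((d.factorial : ℝ) * ((j + d).choose d : ℝ)) * x ^ j := by
        exact mul_le_mul_of_nonneg_right hnat (by positivity)
    _ = (d.factorial : ℝ) * (((j + d).choose d : ℝ) * x ^ j) := by ring

lemma tsum_polygeom_le (d : ℕ) {x : ℝ} (h0 : 0 ≤ x) (h1 : x < 1) :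
    ∑' j : ℕ, ((j : ℝ) + 1) ^ d * x ^ j ≤ (d.factorial : ℝ) * ((1 - x) ^ (d+1))⁻¹ := by
  have hx : ‖x‖ < 1 := by rwa [Real.norm_eq_abs, abs_of_nonneg h0]
  have hsum := summable_choose_mul_geometric_of_norm_lt_one (R := ℝ) d hx
  have key : ∑' j : ℕ, ((j : ℝ) + 1) ^ d * x ^ j
      ≤ ∑' j : ℕ, (d.factorial : ℝ) * (((j + d).choose d : ℝ) * x ^ j) := by
    refine Summable.tsum_le_tsum (fun j => ?_) (summable_polygeom d h0 h1) (hsum.mul_left _)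
    have hnat := pow_le_descFactorial d j
    rw [Nat.descFactorial_eq_factorial_mul_choose] at hnat
    have : ((j:ℝ) + 1) ^ d ≤ (d.factorial : ℝ) * ((j + d).choose d : ℝ) := by
      calc ((j:ℝ) + 1) ^ d = (((j+1)^d : ℕ) : ℝ) := by push_cast; ring
        _ ≤ ((d.factorial * (j+d).choose d : ℕ) : ℝ) := by exact_mod_cast Nat.cast_le.mpr hnat
        _ = _ := by push_cast; ring
    calc ((j:ℝ)+1)^d * x^j ≤ ((d.factorial : ℝ) * ((j + d).choose d : ℝ)) * x ^ j :=
          mul_le_mul_of_nonneg_right this (by positivity)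
      _ = (d.factorial : ℝ) * (((j + d).choose d : ℝ) * x ^ j) := by ring
  refine key.trans ?_
  rw [tsum_mul_left, tsum_choose_mul_geometric_of_norm_lt_one d hx, one_div]

set_option maxHeartbeats 1000000 in
lemma tsum_natAbs_le {v : ℕ → ℝ} (h0 : ∀ m, 0 ≤ v m) (hv : Summable v) :
    ∑' k : ℤ, v k.natAbs ≤ 2 * ∑' m, v m := by
  have hn1 : ∀ n : ℕ, ((n : ℤ)).natAbs = n := fun n => by omega
  have hn2 : ∀ n : ℕ, (-((n : ℤ) + 1)).natAbs = n + 1 := fun n => by omega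
  have hA : Summable fun n : ℕ => v ((n : ℤ)).natAbs := by
    simp only [hn1]; exact hv
  have hB : Summable fun n : ℕ => v ((-((n : ℤ) + 1)).natAbs) := by
    simp only [hn2]; exact (summable_nat_add_iff 1).2 hv
  have e1 : ∑' n : ℕ, v ((n : ℤ)).natAbs = ∑' m, v m := tsum_congr (fun n => by rw [hn1])
  have e2 : ∑' n : ℕ, v ((-((n : ℤ) + 1)).natAbs) = ∑' n : ℕ, v (n + 1) :=
    tsum_congr (fun n => by rw [hn2])
  have e3 : ∑' m, v m = v 0 + ∑' n, v (n + 1) := Summable.tsum_eq_zero_add hv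
  rw [tsum_of_nat_of_neg_add_one hA hB, e1, e2]
  linarith [h0 0]

lemma summable_natAbs {v : ℕ → ℝ} (hv : Summable v) :
    Summable (fun k : ℤ => v k.natAbs) := by
  refine Summable.of_nat_of_neg ?_ ?_ <;> simpa using hv


/-- The `j`-th term-by-term derivative series. -/
def termF (c : ℤ → ℂ) (θ : ℝ) (j : ℕ) (k : ℤ) (r : ℝ) : ℂ :=
  c k * (k.natAbs.descFactorial j : ℂ) * (r : ℂ) ^ (k.natAbs - j) *
    Complex.exp ((k : ℂ) * θ * Complex.I)

def Fser (c : ℤ → ℂ) (θ : ℝ) (j : ℕ) (r : ℝ) : ℂ := ∑' k : ℤ, termF c θ j k r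

lemma norm_exp_I (k : ℤ) (θ : ℝ) : ‖Complex.exp ((k : ℂ) * θ * Complex.I)‖ = 1 := by
  have h : (k : ℂ) * θ * Complex.I = ((k * θ : ℝ) : ℂ) * Complex.I := by push_cast; ring
  rw [h, Complex.norm_exp_ofReal_mul_I]

lemma norm_termF (c : ℤ → ℂ) (θ : ℝ) (j : ℕ) (k : ℤ) {y : ℝ} (hy : 0 ≤ y) :
    ‖termF c θ j k y‖ = ‖c k‖ * (k.natAbs.descFactorial j : ℝ) * y ^ (k.natAbs - j) := by
  rw [termF, norm_mul, norm_mul, norm_mul, norm_exp_I, mul_one, norm_pow,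
    Complex.norm_natCast, Complex.norm_real, Real.norm_eq_abs, abs_of_nonneg hy]

lemma norm_c_le {c : ℤ → ℂ} (hS : Summable fun k : ℤ => ‖c k‖ ^ 2) (k : ℤ) :
    ‖c k‖ ≤ Real.sqrt (∑' i : ℤ, ‖c i‖ ^ 2) := by
  have h1 : ‖c k‖ ^ 2 ≤ ∑' i : ℤ, ‖c i‖ ^ 2 := Summable.le_tsum hS k (fun i _ => sq_nonneg _)
  calc ‖c k‖ = Real.sqrt (‖c k‖ ^ 2) := (Real.sqrt_sq (norm_nonneg _)).symm
    _ ≤ _ := Real.sqrt_le_sqrt h1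

lemma pow_natsub_le {b : ℝ} (hb0 : 0 < b) (hb1 : b ≤ 1) (m j : ℕ) :
    b ^ (m - j) ≤ b ^ m * (b⁻¹) ^ j := by
  rw [inv_pow, ← div_eq_mul_inv, le_div_iff₀ (pow_pos hb0 j), ← pow_add]
  exact pow_le_pow_of_le_one hb0.le hb1 (by omega)

/-- The dominating sequence. -/
def bFun (c : ℤ → ℂ) (b : ℝ) (j : ℕ) (k : ℤ) : ℝ :=
  Real.sqrt (∑' i : ℤ, ‖c i‖ ^ 2) * ((b⁻¹) ^ j * ((k.natAbs : ℝ) ^ j * b ^ k.natAbs))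

lemma termF_bound {c : ℤ → ℂ} (hS : Summable fun k : ℤ => ‖c k‖ ^ 2) (θ : ℝ) (j : ℕ)
    {b y : ℝ} (hb0 : 0 < b) (hb1 : b < 1) (hy0 : 0 ≤ y) (hyb : y ≤ b) (k : ℤ) :
    ‖termF c θ j k y‖ ≤ bFun c b j k := by
  rw [norm_termF c θ j k hy0, bFun]
  have h1 : (k.natAbs.descFactorial j : ℝ) ≤ (k.natAbs : ℝ) ^ j := by
    exact_mod_cast Nat.cast_le.mpr (Nat.descFactorial_le_pow _ _)
  have h2 : y ^ (k.natAbs - j) ≤ b ^ (k.natAbs - j) := pow_le_pow_left₀ hy0 hyb _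
  have h3 : b ^ (k.natAbs - j) ≤ b ^ k.natAbs * (b⁻¹) ^ j := pow_natsub_le hb0 hb1.le _ _
  calc ‖c k‖ * (k.natAbs.descFactorial j : ℝ) * y ^ (k.natAbs - j)
      ≤ Real.sqrt (∑' i : ℤ, ‖c i‖ ^ 2) * ((k.natAbs : ℝ) ^ j)
        * (b ^ k.natAbs * (b⁻¹) ^ j) := by
        refine mul_le_mul (mul_le_mul (norm_c_le hS k) h1 (by positivity)
          (Real.sqrt_nonneg _)) (h2.trans h3) (by positivity) ?_
        positivity
    _ = _ := by ring

lemma summable_geom_aux (j : ℕ) {b : ℝ} (hb0 : 0 < b) (hb1 : b < 1) :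
    Summable (fun k : ℤ => (k.natAbs : ℝ) ^ j * b ^ k.natAbs) := by
  refine summable_natAbs (v := fun m : ℕ => (m : ℝ) ^ j * b ^ m) ?_
  exact summable_pow_mul_geometric_of_norm_lt_one j
    (by rwa [Real.norm_eq_abs, abs_of_nonneg hb0.le])

lemma summable_bFun (c : ℤ → ℂ) (j : ℕ) {b : ℝ} (hb0 : 0 < b) (hb1 : b < 1) :
    Summable (bFun c b j) := by
  unfold bFun
  exact ((summable_geom_aux j hb0 hb1).mul_left _).mul_left _

lemma summable_termF {c : ℤ → ℂ} (hS : Summable fun k : ℤ => ‖c k‖ ^ 2) (θ : ℝ) (j : ℕ)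
    {y : ℝ} (hy0 : 0 ≤ y) (hy1 : y < 1) :
    Summable (fun k : ℤ => termF c θ j k y) := by
  set b := (y + 1) / 2 with hb
  have hb0 : 0 < b := by rw [hb]; linarith
  have hb1 : b < 1 := by rw [hb]; linarith
  have hyb : y ≤ b := by rw [hb]; linarith
  exact Summable.of_norm_bounded (summable_bFun c j hb0 hb1)
    (fun k => termF_bound hS θ j hb0 hb1 hy0 hyb k)

lemma summable_norm_termF {c : ℤ → ℂ} (hS : Summable fun k : ℤ => ‖c k‖ ^ 2) (θ : ℝ) (j : ℕ)
    {y : ℝ} (hy0 : 0 ≤ y) (hy1 : y < 1) :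
    Summable (fun k : ℤ => ‖termF c θ j k y‖) := by
  set b := (y + 1) / 2 with hb
  have hb0 : 0 < b := by rw [hb]; linarith
  have hb1 : b < 1 := by rw [hb]; linarith
  have hyb : y ≤ b := by rw [hb]; linarith
  exact Summable.of_nonneg_of_le (fun k => norm_nonneg _)
    (fun k => termF_bound hS θ j hb0 hb1 hy0 hyb k) (summable_bFun c j hb0 hb1)

set_option maxHeartbeats 1000000 in
lemma hasDerivAt_Fser {c : ℤ → ℂ} (hS : Summable fun k : ℤ => ‖c k‖ ^ 2) (θ : ℝ) (j : ℕ)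
    {r : ℝ} (hr : r ∈ Set.Ioo (0:ℝ) 1) :
    HasDerivAt (Fser c θ j) (Fser c θ (j+1) r) r := by
  obtain ⟨hr0, hr1⟩ := hr
  set b := (r + 1) / 2 with hb
  have hb0 : 0 < b := by rw [hb]; linarith
  have hb1 : b < 1 := by rw [hb]; linarith
  have hrb : r < b := by rw [hb]; linarith
  have hopen : IsOpen (Set.Ioo (0:ℝ) b) := isOpen_Ioo
  have hpre : IsPreconnected (Set.Ioo (0:ℝ) b) := (convex_Ioo (0:ℝ) b).isPreconnected
  have hrs : r ∈ Set.Ioo (0:ℝ) b := ⟨hr0, hrb⟩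
  have key := hasDerivAt_tsum_of_isPreconnected
    (u := bFun c b (j+1))
    (g := fun k y => termF c θ j k y) (g' := fun k y => termF c θ (j+1) k y)
    (summable_bFun c (j+1) hb0 hb1)
    hopen hpre ?_ ?_ hrs (summable_termF hS θ j hr0.le hr1) hrs
  · exact key
  · intro k y hy
    have hpow : HasDerivAt (fun y : ℝ => ((y : ℂ)) ^ (k.natAbs - j))
        (((k.natAbs - j : ℕ) : ℂ) * (y : ℂ) ^ (k.natAbs - j - 1)) y :=
      (hasDerivAt_pow (k.natAbs - j) ((y : ℂ))).comp_ofReal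
    have h2 := (hpow.const_mul (c k * (k.natAbs.descFactorial j : ℂ))).mul_const
      (Complex.exp ((k : ℂ) * θ * Complex.I))
    convert h2 using 1
    · rfl
    · rfl
    unfold termF
    beta_reduce
    rw [show k.natAbs.descFactorial (j+1) = (k.natAbs - j) * k.natAbs.descFactorial j from
      Nat.descFactorial_succ _ _]
    rw [show k.natAbs - (j+1) = k.natAbs - j - 1 from by omega]
    push_cast
    ring
  · intro k y hy
    exact termF_bound hS θ (j+1) hb0 hb1 hy.1.le hy.2.le k


lemma eqOn_iteratedDeriv {c : ℤ → ℂ} (hS : Summable fun k : ℤ => ‖c k‖ ^ 2) (θ : ℝ) (j : ℕ) :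
    Set.EqOn (iteratedDeriv j (Fser c θ 0)) (Fser c θ j) (Set.Ioo (0:ℝ) 1) := by
  induction j with
  | zero => rw [iteratedDeriv_zero]; exact Set.eqOn_refl _ _
  | succ j ih =>
      intro r hr
      rw [iteratedDeriv_succ]
      have h1 : iteratedDeriv j (Fser c θ 0) =ᶠ[nhds r] Fser c θ j :=
        Filter.eventuallyEq_of_mem (isOpen_Ioo.mem_nhds hr) ih
      rw [h1.deriv_eq]
      exact (hasDerivAt_Fser hS θ j hr).deriv

lemma contDiffOn_Fser {c : ℤ → ℂ} (hS : Summable fun k : ℤ => ‖c k‖ ^ 2) (θ : ℝ) (m j : ℕ) :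
    ContDiffOn ℝ m (Fser c θ j) (Set.Ioo (0:ℝ) 1) := by
  induction m generalizing j with
  | zero =>
      rw [show ((0:ℕ) : WithTop ℕ∞) = 0 from rfl, contDiffOn_zero]
      exact fun r hr => (hasDerivAt_Fser hS θ j hr).continuousAt.continuousWithinAt
  | succ m ih =>
      rw [show ((m+1:ℕ) : WithTop ℕ∞) = (m : WithTop ℕ∞) + 1 from by push_cast; rfl,
        contDiffOn_succ_iff_deriv_of_isOpen isOpen_Ioo]
      refine ⟨fun r hr => (hasDerivAt_Fser hS θ j hr).differentiableAt.differentiableWithinAt,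
        ?_, ?_⟩
      · intro h; exact absurd h (by simp)
      · exact (ih (j+1)).congr (fun r hr => (hasDerivAt_Fser hS θ j hr).deriv)

set_option maxHeartbeats 2000000 in
lemma final_bound (ℓ n : ℕ) (hℓ : 1 ≤ ℓ) (hn : 1 ≤ n) {c : ℤ → ℂ}
    (hc : ∀ k : ℤ, k.natAbs ≤ n → c k = 0)
    (hS : Summable fun k : ℤ => ‖c k‖ ^ 2) (θ : ℝ) {r : ℝ} (hr : r ∈ Set.Ioo (0:ℝ) 1) :
    ‖Fser c θ ℓ r‖ ≤ Real.sqrt (2 * 4 ^ ℓ * ((2*ℓ).factorial : ℝ)) * (n:ℝ) ^ ℓ *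
      r ^ ((n:ℝ) + 1 - ℓ) * (1 - r) ^ (-((ℓ:ℝ) + 1/2)) *
      Real.sqrt (∑' k : ℤ, ‖c k‖ ^ 2) := by
  obtain ⟨hr0, hr1⟩ := hr
  set sq := Real.sqrt (∑' k : ℤ, ‖c k‖ ^ 2) with hsq
  have hsq0 : 0 ≤ sq := Real.sqrt_nonneg _
  -- the weight sequence
  set vv : ℕ → ℝ := fun m =>
    if m ≤ n then 0 else (m.descFactorial ℓ : ℝ) * r ^ (m - ℓ) with hvv
  have hvv0 : ∀ m, 0 ≤ vv m := by
    intro m; rw [hvv]; dsimp only; split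
    · exact le_rfl
    · exact mul_nonneg (Nat.cast_nonneg _) (pow_nonneg hr0.le _)
  have hx0 : (0:ℝ) ≤ r ^ 2 := by positivity
  have hx1 : r ^ 2 < 1 := by nlinarith
  have h1r : 0 < 1 - r := by linarith
  -- upper bound sequence over ℕ, with rpow
  set u : ℕ → ℝ := fun m =>
    if m ≤ n then 0 else ((m:ℝ) ^ ℓ * r ^ ((m:ℝ) - ℓ)) ^ 2 with hu
  have hu0 : ∀ m, 0 ≤ u m := by
    intro m; rw [hu]; dsimp only; split
    · exact le_rfl
    · positivity
  -- termwise: vv ^ 2 ≤ u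
  have hvu : ∀ m, vv m ^ 2 ≤ u m := by
    intro m; rw [hvv, hu]; dsimp only; split
    · simp
    · rcases le_or_gt ℓ m with h | h
      · have e1 : (r : ℝ) ^ (m - ℓ) = r ^ ((m:ℝ) - ℓ) := by
          rw [← Real.rpow_natCast r (m - ℓ)]
          congr 1
          push_cast [h]
          ring
        rw [e1]
        have h2 : (m.descFactorial ℓ : ℝ) ≤ (m:ℝ) ^ ℓ := by
          exact_mod_cast Nat.cast_le.mpr (Nat.descFactorial_le_pow _ _)
        have h3 : (0:ℝ) ≤ r ^ ((m:ℝ) - ℓ) := Real.rpow_nonneg hr0.le _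
        have h4 : (0:ℝ) ≤ (m.descFactorial ℓ : ℝ) := Nat.cast_nonneg _
        have := mul_le_mul_of_nonneg_right h2 h3
        nlinarith [mul_nonneg h4 h3]
      · rw [Nat.descFactorial_eq_zero_iff_lt.mpr h]
        rw [Nat.cast_zero, zero_mul]
        calc (0:ℝ) ^ 2 = 0 := by norm_num
          _ ≤ _ := by positivity
  -- summability of u
  have hbase : Summable (fun m : ℕ => ((m:ℝ) ^ (2*ℓ) * (r^2) ^ m)) := by
    have := summable_pow_mul_geometric_of_norm_lt_one (R := ℝ) (2*ℓ)
      (r := r^2) (by rwa [Real.norm_eq_abs, abs_of_nonneg hx0])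
    exact this
  have huE : ∀ m : ℕ, u m ≤ ((r⁻¹) ^ ℓ) ^ 2 * ((m:ℝ) ^ (2*ℓ) * (r^2) ^ m) := by
    intro m
    rw [hu]; dsimp only
    split
    · positivity
    · rw [Real.rpow_sub hr0, Real.rpow_natCast, Real.rpow_natCast,
        div_eq_mul_inv, ← inv_pow]
      calc ((m:ℝ) ^ ℓ * (r ^ m * (r⁻¹) ^ ℓ)) ^ 2
          = ((r⁻¹) ^ ℓ) ^ 2 * ((m:ℝ) ^ (2*ℓ) * (r^2) ^ m) := by ring
        _ ≤ _ := le_rfl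
  have hSumu : Summable u :=
    Summable.of_nonneg_of_le hu0 huE (hbase.mul_left _)
  have hSumvv2 : Summable (fun m => vv m ^ 2) :=
    Summable.of_nonneg_of_le (fun m => sq_nonneg _) hvu hSumu
  set g : ℤ → ℝ := fun k => vv k.natAbs with hgdef
  have hg0 : ∀ k, 0 ≤ g k := fun k => hvv0 _
  have hSumg2 : Summable (fun k : ℤ => g k ^ 2) :=
    summable_natAbs (v := fun m => vv m ^ 2) hSumvv2
  -- step 1: pointwise norm identity
  have hnormterm : ∀ k : ℤ, ‖termF c θ ℓ k r‖ = ‖c k‖ * g k := by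
    intro k
    rw [norm_termF c θ ℓ k hr0.le, hgdef]; dsimp only
    rw [hvv]; dsimp only
    by_cases h : k.natAbs ≤ n
    · rw [if_pos h, hc k h]; simp
    · rw [if_neg h]; ring
  have step1 : ‖Fser c θ ℓ r‖ ≤ ∑' k : ℤ, ‖c k‖ * g k := by
    unfold Fser
    refine (norm_tsum_le_tsum_norm (summable_norm_termF hS θ ℓ hr0.le hr1)).trans_eq ?_
    exact tsum_congr hnormterm
  have step2 : ∑' k : ℤ, ‖c k‖ * g k ≤ sq * Real.sqrt (∑' k : ℤ, g k ^ 2) :=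
    tsum_cs (fun k => ‖c k‖) g (fun k => norm_nonneg _) hg0 hS hSumg2
  have step4 : ∑' k : ℤ, g k ^ 2 ≤ 2 * ∑' m : ℕ, vv m ^ 2 :=
    tsum_natAbs_le (v := fun m => vv m ^ 2) (fun m => sq_nonneg _) hSumvv2
  have step5 : ∑' m : ℕ, vv m ^ 2 ≤ ∑' m : ℕ, u m :=
    Summable.tsum_le_tsum hvu hSumvv2 hSumu
  have hzero : ∀ i ∈ Finset.range (n+1), u i = 0 := by
    intro i hi
    rw [hu]; dsimp only
    rw [if_pos (by simpa [Nat.lt_succ_iff] using Finset.mem_range.mp hi)]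
  have step6 : ∑' m : ℕ, u m = ∑' j : ℕ, u (j + (n+1)) := by
    have h := Summable.sum_add_tsum_nat_add (f := u) (n+1) hSumu
    rw [Finset.sum_eq_zero hzero, zero_add] at h
    exact h.symm
  set A : ℝ := (n:ℝ) ^ ℓ * r ^ ((n:ℝ) + 1 - ℓ) with hA
  have hA0 : 0 ≤ A := by
    rw [hA]
    exact mul_nonneg (by positivity) (Real.rpow_nonneg hr0.le _)
  have step7 : ∀ j : ℕ, u (j + (n+1)) ≤
      (A ^ 2 * 4 ^ ℓ) * (((j:ℝ) + 1) ^ (2*ℓ) * (r^2) ^ j) := by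
    intro j
    rw [hu]; dsimp only
    rw [if_neg (by omega)]
    have hcast : ((j + (n+1) : ℕ) : ℝ) = (j:ℝ) + (n:ℝ) + 1 := by push_cast; ring
    have e1 : r ^ (((j + (n+1) : ℕ) : ℝ) - (ℓ:ℝ)) = r ^ ((n:ℝ) + 1 - ℓ) * r ^ j := by
      rw [← Real.rpow_natCast r j, ← Real.rpow_add hr0]
      congr 1
      rw [hcast]; ring
    rw [e1]
    have h0R : (0:ℝ) ≤ r ^ ((n:ℝ) + 1 - ℓ) * r ^ j :=
      mul_nonneg (Real.rpow_nonneg hr0.le _) (by positivity)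
    have hle : ((j + (n+1) : ℕ) : ℝ) ≤ (n:ℝ) * (2 * ((j:ℝ) + 1)) := by
      rw [hcast]
      have h1n : (1:ℝ) ≤ (n:ℝ) := by exact_mod_cast hn
      have hj0 : (0:ℝ) ≤ (j:ℝ) := Nat.cast_nonneg _
      nlinarith
    have h1 : ((j + (n+1) : ℕ) : ℝ) ^ ℓ ≤ ((n:ℝ) * (2 * ((j:ℝ) + 1))) ^ ℓ :=
      pow_le_pow_left₀ (Nat.cast_nonneg _) hle ℓ
    calc (((j + (n+1) : ℕ) : ℝ) ^ ℓ * (r ^ ((n:ℝ) + 1 - ℓ) * r ^ j)) ^ 2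
        ≤ (((n:ℝ) * (2 * ((j:ℝ) + 1))) ^ ℓ * (r ^ ((n:ℝ) + 1 - ℓ) * r ^ j)) ^ 2 := by
          have := mul_le_mul_of_nonneg_right h1 h0R
          have hnn : (0:ℝ) ≤ ((j + (n+1) : ℕ) : ℝ) ^ ℓ * (r ^ ((n:ℝ) + 1 - ℓ) * r ^ j) :=
            mul_nonneg (by positivity) h0R
          nlinarith
      _ = (A ^ 2 * 4 ^ ℓ) * (((j:ℝ) + 1) ^ (2*ℓ) * (r^2) ^ j) := by
          have h4 : (4:ℝ) ^ ℓ = 2 ^ (ℓ * 2) := by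
            rw [mul_comm ℓ 2, pow_mul]; norm_num
          rw [hA, h4, mul_pow (n:ℝ) (2 * ((j:ℝ) + 1)) ℓ, mul_pow (2:ℝ) ((j:ℝ) + 1) ℓ]
          ring
  have hshift : Summable (fun j : ℕ => u (j + (n+1))) := (summable_nat_add_iff (n+1)).2 hSumu
  have hpolysum := summable_polygeom (2*ℓ) hx0 hx1
  have step8 : ∑' j : ℕ, u (j + (n+1)) ≤
      (A ^ 2 * 4 ^ ℓ) * (((2*ℓ).factorial : ℝ) * ((1 - r^2) ^ (2*ℓ+1))⁻¹) := by
    calc ∑' j : ℕ, u (j + (n+1))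
        ≤ ∑' j : ℕ, (A ^ 2 * 4 ^ ℓ) * (((j:ℝ) + 1) ^ (2*ℓ) * (r^2) ^ j) :=
          Summable.tsum_le_tsum step7 hshift (hpolysum.mul_left _)
      _ = (A ^ 2 * 4 ^ ℓ) * ∑' j : ℕ, ((j:ℝ) + 1) ^ (2*ℓ) * (r^2) ^ j := tsum_mul_left
      _ ≤ _ := mul_le_mul_of_nonneg_left (tsum_polygeom_le (2*ℓ) hx0 hx1) (by positivity)
  have step9 : ((1 - r^2) ^ (2*ℓ+1))⁻¹ ≤ ((1 - r) ^ (2*ℓ+1))⁻¹ := by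
    have hle2 : (1 - r) ^ (2*ℓ+1) ≤ (1 - r^2) ^ (2*ℓ+1) :=
      pow_le_pow_left₀ h1r.le (by nlinarith) _
    exact inv_anti₀ (by positivity) hle2
  set D : ℝ := (1 - r) ^ (-((ℓ:ℝ) + 1/2)) with hD
  have hD0 : 0 ≤ D := Real.rpow_nonneg h1r.le _
  have hDsq : D ^ 2 = ((1 - r) ^ (2*ℓ+1))⁻¹ := by
    have e1 : D ^ 2 = (1 - r) ^ (-(2*(ℓ:ℝ)+1)) := by
      rw [hD, pow_two, ← Real.rpow_add h1r]
      congr 1; ring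
    rw [e1, Real.rpow_neg h1r.le,
      show (2*(ℓ:ℝ)+1) = ((2*ℓ+1 : ℕ) : ℝ) from by push_cast; ring,
      Real.rpow_natCast]
  have hT : ∑' k : ℤ, g k ^ 2 ≤ (2 * 4 ^ ℓ * ((2*ℓ).factorial : ℝ)) * (A * D) ^ 2 := by
    have hAD : (A * D) ^ 2 = A ^ 2 * ((1 - r) ^ (2*ℓ+1))⁻¹ := by
      rw [mul_pow, hDsq]
    rw [hAD]
    calc ∑' k : ℤ, g k ^ 2 ≤ 2 * ∑' m : ℕ, vv m ^ 2 := step4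
      _ ≤ 2 * ∑' m : ℕ, u m := by linarith
      _ = 2 * ∑' j : ℕ, u (j + (n+1)) := by rw [step6]
      _ ≤ 2 * ((A ^ 2 * 4 ^ ℓ) * (((2*ℓ).factorial : ℝ) * ((1 - r^2) ^ (2*ℓ+1))⁻¹)) := by
          linarith
      _ ≤ 2 * ((A ^ 2 * 4 ^ ℓ) * (((2*ℓ).factorial : ℝ) * ((1 - r) ^ (2*ℓ+1))⁻¹)) := by
          gcongr
      _ = (2 * 4 ^ ℓ * ((2*ℓ).factorial : ℝ)) * (A ^ 2 * ((1 - r) ^ (2*ℓ+1))⁻¹) := by ring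
  have hfinal : Real.sqrt (∑' k : ℤ, g k ^ 2) ≤
      Real.sqrt (2 * 4 ^ ℓ * ((2*ℓ).factorial : ℝ)) * (A * D) := by
    calc Real.sqrt (∑' k : ℤ, g k ^ 2)
        ≤ Real.sqrt ((2 * 4 ^ ℓ * ((2*ℓ).factorial : ℝ)) * (A * D) ^ 2) :=
          Real.sqrt_le_sqrt hT
      _ = _ := by
          rw [Real.sqrt_mul (by positivity), Real.sqrt_sq (mul_nonneg hA0 hD0)]
  calc ‖Fser c θ ℓ r‖ ≤ ∑' k : ℤ, ‖c k‖ * g k := step1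
    _ ≤ sq * Real.sqrt (∑' k : ℤ, g k ^ 2) := step2
    _ ≤ sq * (Real.sqrt (2 * 4 ^ ℓ * ((2*ℓ).factorial : ℝ)) * (A * D)) :=
        mul_le_mul_of_nonneg_left hfinal hsq0
    _ = _ := by rw [hA, hD]; ring


end Stmt8Aux


theorem stmt8 (ℓ : ℕ) (hℓ : 1 ≤ ℓ) :
    ∃ C > 0, ∀ n : ℕ, 1 ≤ n → ∀ c : ℤ → ℂ,
      (∀ k : ℤ, k.natAbs ≤ n → c k = 0) →
      (Summable fun k : ℤ => ‖c k‖ ^ 2) → ∀ θ : ℝ,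
      ContDiffOn ℝ ℓ
        (fun r : ℝ =>
          ∑' k : ℤ, c k * (r : ℂ) ^ k.natAbs * Complex.exp ((k : ℂ) * θ * Complex.I))
        (Set.Ioo 0 1) ∧
      ∀ r ∈ Set.Ioo (0:ℝ) 1,
        ‖iteratedDeriv ℓ
            (fun r : ℝ =>
              ∑' k : ℤ, c k * (r : ℂ) ^ k.natAbs * Complex.exp ((k : ℂ) * θ * Complex.I)) r‖
          ≤ C * (n : ℝ) ^ ℓ * r ^ ((n : ℝ) + 1 - ℓ) * (1 - r) ^ (-((ℓ : ℝ) + 1 / 2)) *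
            Real.sqrt (∑' k : ℤ, ‖c k‖ ^ 2) := by

  have hCpos : (0:ℝ) < Real.sqrt (2 * 4 ^ ℓ * ((2*ℓ).factorial : ℝ)) := by
    apply Real.sqrt_pos.mpr
    have := Nat.factorial_pos (2*ℓ)
    positivity
  refine ⟨Real.sqrt (2 * 4 ^ ℓ * ((2*ℓ).factorial : ℝ)), hCpos, ?_⟩
  intro n hn c hc hS θ
  have hfun : (fun r : ℝ =>
      ∑' k : ℤ, c k * (r : ℂ) ^ k.natAbs * Complex.exp ((k : ℂ) * θ * Complex.I))
      = Stmt8Aux.Fser c θ 0 := by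
    funext r
    unfold Stmt8Aux.Fser Stmt8Aux.termF
    exact tsum_congr fun k => by simp
  rw [hfun]
  constructor
  · exact Stmt8Aux.contDiffOn_Fser hS θ ℓ 0
  · intro r hr
    rw [Stmt8Aux.eqOn_iteratedDeriv hS θ ℓ hr]
    exact Stmt8Aux.final_bound ℓ n hℓ hn hc hS θ hr
end
end

section
/- For every p with 1 < p < 2 and every bounded open set Ω ⊂ ℝ² there exists a constant C > 0 (depending only on p and the diameter of Ω) such that for all distinct a, b ∈ Ω, ( ∫_Ω ‖ (x−a)/‖x−a‖² − (x−b)/‖x−b‖² ‖^p dx )^{1/p} ≤ C · ‖a − b‖^{(2/p) − 1}. -/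
open MeasureTheory

set_option maxHeartbeats 2000000

noncomputable section

namespace Stmt12Aux

open Metric Set Real

abbrev E2 := EuclideanSpace ℝ (Fin 2)

lemma finrank_E2 : Module.finrank ℝ E2 = 2 := by
  simp [finrank_euclideanSpace]

lemma meas_rpow (s : ℝ) : Measurable fun y : E2 => ‖y‖ ^ s := by
  fun_prop

/-- Near-field base integrability: `‖y‖^(-s)` is integrable on the unit closed ball when `s < 2`. -/
lemma near_base {s : ℝ} (hs0 : 0 < s) (hs2 : s < 2) :
    Integrable ((closedBall (0:E2) 1).indicator fun y => ‖y‖ ^ (-s)) := by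
  set f : E2 → ℝ := (closedBall (0:E2) 1).indicator fun y => ‖y‖ ^ (-s) with hf
  have hmeas : Measurable f := (meas_rpow (-s)).indicator measurableSet_closedBall
  have hnn : ∀ y, 0 ≤ f y := fun y =>
    Set.indicator_nonneg (fun y _ => Real.rpow_nonneg (norm_nonneg _) _) _
  refine ⟨hmeas.aestronglyMeasurable, ?_⟩
  rw [hasFiniteIntegral_iff_ofReal (Filter.Eventually.of_forall hnn)]
  rw [lintegral_eq_lintegral_meas_le volume (Filter.Eventually.of_forall hnn)
    hmeas.aemeasurable]
  have hsub : ∀ t : ℝ, 0 < t →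
      {a : E2 | t ≤ f a} ⊆ closedBall 0 1 ∩ closedBall 0 (t ^ (-s⁻¹)) := by
    intro t ht a ha
    simp only [mem_setOf_eq, hf] at ha
    by_cases hmem : a ∈ closedBall (0:E2) 1
    · rw [Set.indicator_of_mem hmem] at ha
      refine ⟨hmem, ?_⟩
      have ha0 : a ≠ 0 := by
        rintro rfl
        rw [norm_zero, Real.zero_rpow (neg_ne_zero.mpr hs0.ne')] at ha
        linarith
      have hna : (0:ℝ) < ‖a‖ := norm_pos_iff.mpr ha0
      rw [mem_closedBall_zero_iff]
      have hmono : (‖a‖ ^ (-s)) ^ (-s⁻¹) ≤ t ^ (-s⁻¹) :=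
        Real.rpow_le_rpow_of_nonpos ht ha
          (neg_nonpos.mpr (inv_nonneg.mpr hs0.le))
      have hexp : (-s) * (-s⁻¹) = 1 := by field_simp
      calc ‖a‖ = (‖a‖ ^ (-s)) ^ (-s⁻¹) := by
            rw [← Real.rpow_mul (norm_nonneg a), hexp, Real.rpow_one]
        _ ≤ t ^ (-s⁻¹) := hmono
    · rw [Set.indicator_of_notMem hmem] at ha; linarith
  calc ∫⁻ t in Set.Ioi (0:ℝ), volume {a : E2 | t ≤ f a}
      ≤ ∫⁻ t in Set.Ioc (0:ℝ) 1 ∪ Set.Ioi 1, volume {a : E2 | t ≤ f a} :=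
        lintegral_mono_set Set.Ioi_subset_Ioc_union_Ioi
    _ ≤ (∫⁻ t in Set.Ioc (0:ℝ) 1, volume {a : E2 | t ≤ f a})
        + ∫⁻ t in Set.Ioi (1:ℝ), volume {a : E2 | t ≤ f a} := lintegral_union_le _ _ _
    _ < ⊤ := by
        refine ENNReal.add_lt_top.2 ⟨?_, ?_⟩
        · calc (∫⁻ t in Set.Ioc (0:ℝ) 1, volume {a : E2 | t ≤ f a})
              ≤ ∫⁻ _ in Set.Ioc (0:ℝ) 1, volume (closedBall (0:E2) 1) := by
                refine setLIntegral_mono' measurableSet_Ioc fun t ht => ?_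
                exact measure_mono ((hsub t ht.1).trans Set.inter_subset_left)
            _ < ⊤ := by
                rw [setLIntegral_const]
                exact ENNReal.mul_lt_top measure_closedBall_lt_top (by simp)
        · have hlt : (∫⁻ t in Set.Ioi (1:ℝ), volume {a : E2 | t ≤ f a})
              ≤ ∫⁻ t in Set.Ioi (1:ℝ),
                  ENNReal.ofReal (t ^ (-(2/s))) * volume (ball (0:E2) 1) := by
            refine setLIntegral_mono' measurableSet_Ioi fun t ht => ?_
            have ht0 : (0:ℝ) < t := lt_trans one_pos ht
            calc volume {a : E2 | t ≤ f a}
                ≤ volume (closedBall (0:E2) (t ^ (-s⁻¹))) :=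
                  measure_mono ((hsub t ht0).trans Set.inter_subset_right)
              _ = ENNReal.ofReal ((t ^ (-s⁻¹)) ^ Module.finrank ℝ E2) *
                    volume (ball (0:E2) 1) :=
                  Measure.addHaar_closedBall volume 0 (by positivity)
              _ = ENNReal.ofReal (t ^ (-(2/s))) * volume (ball (0:E2) 1) := by
                  congr 1
                  rw [finrank_E2, ← Real.rpow_natCast (t ^ (-s⁻¹)) 2,
                    ← Real.rpow_mul ht0.le]
                  congr 1
                  push_cast
                  field_simp
          refine lt_of_le_of_lt hlt ?_
          rw [lintegral_mul_const' _ _ measure_ball_lt_top.ne]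
          refine ENNReal.mul_lt_top ?_ measure_ball_lt_top
          have hint : IntegrableOn (fun t : ℝ => t ^ (-(2/s))) (Set.Ioi 1) := by
            refine integrableOn_Ioi_rpow_of_lt ?_ one_pos
            rw [neg_lt_neg_iff]
            exact (one_lt_div hs0).mpr hs2
          exact hint.setLIntegral_lt_top

/-- Far-field base integrability: `‖y‖^(-t)` is integrable outside the unit ball when `t > 2`. -/
lemma far_base {t : ℝ} (ht : 2 < t) :
    Integrable (((closedBall (0:E2) 1)ᶜ).indicator fun y => ‖y‖ ^ (-t)) := by
  have key : Integrable (fun x : E2 => (2:ℝ) ^ t * (1 + ‖x‖) ^ (-t)) := by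
    refine Integrable.const_mul ?_ _
    refine integrable_one_add_norm ?_
    rw [finrank_E2]; exact_mod_cast ht
  refine key.mono'
    (((meas_rpow (-t)).indicator measurableSet_closedBall.compl).aestronglyMeasurable)
    (Filter.Eventually.of_forall fun x => ?_)
  have hnn : (0:ℝ) ≤ ((closedBall (0:E2) 1)ᶜ).indicator (fun y => ‖y‖ ^ (-t)) x :=
    Set.indicator_nonneg (fun y _ => Real.rpow_nonneg (norm_nonneg _) _) _
  rw [Real.norm_eq_abs, abs_of_nonneg hnn]
  by_cases hx : x ∈ (closedBall (0:E2) 1)ᶜ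
  · rw [Set.indicator_of_mem hx]
    have h1 : (1:ℝ) < ‖x‖ := by
      simpa [mem_closedBall_zero_iff] using hx
    have hb : (1 + ‖x‖) ≤ 2 * ‖x‖ := by linarith
    have h2 : ((2:ℝ) * ‖x‖) ^ (-t) ≤ (1 + ‖x‖) ^ (-t) :=
      Real.rpow_le_rpow_of_nonpos (by linarith) hb (by linarith)
    have h3 : ((2:ℝ) * ‖x‖) ^ (-t) = 2 ^ (-t) * ‖x‖ ^ (-t) :=
      Real.mul_rpow (by norm_num) (norm_nonneg _)
    calc ‖x‖ ^ (-t) = 2 ^ t * (2 ^ (-t) * ‖x‖ ^ (-t)) := by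
          rw [← mul_assoc, ← Real.rpow_add (by norm_num : (0:ℝ) < 2)]
          simp
      _ ≤ 2 ^ t * (1 + ‖x‖) ^ (-t) := by
          rw [← h3]
          exact mul_le_mul_of_nonneg_left h2 (by positivity)
  · rw [Set.indicator_of_notMem hx]
    positivity

/-- scaling for the near part -/
lemma near_scaled {s : ℝ} (hs0 : 0 < s) (hs2 : s < 2) {d : ℝ} (hd : 0 < d) :
    Integrable ((closedBall (0:E2) d).indicator fun y => ‖y‖ ^ (-s)) ∧
    (∫ y, (closedBall (0:E2) d).indicator (fun y => ‖y‖ ^ (-s)) y)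
      = d ^ (2 - s) * ∫ y, (closedBall (0:E2) 1).indicator (fun y => ‖y‖ ^ (-s)) y := by
  have hcomp : ∀ y : E2, (closedBall (0:E2) d).indicator (fun y => ‖y‖ ^ (-s)) (d • y)
      = d ^ (-s) * (closedBall (0:E2) 1).indicator (fun y => ‖y‖ ^ (-s)) y := by
    intro y
    have hnorm : ‖d • y‖ = d * ‖y‖ := by
      rw [norm_smul, Real.norm_eq_abs, abs_of_pos hd]
    have hmem : d • y ∈ closedBall (0:E2) d ↔ y ∈ closedBall (0:E2) 1 := by
      simp only [mem_closedBall_zero_iff, hnorm]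
      constructor
      · intro h; nlinarith
      · intro h; nlinarith
    by_cases hy : y ∈ closedBall (0:E2) 1
    · rw [Set.indicator_of_mem (hmem.mpr hy), Set.indicator_of_mem hy, hnorm,
        Real.mul_rpow hd.le (norm_nonneg _)]
    · rw [Set.indicator_of_notMem (fun h => hy (hmem.mp h)), Set.indicator_of_notMem hy,
        mul_zero]
  have hint1 : Integrable (fun y : E2 =>
      (closedBall (0:E2) d).indicator (fun y => ‖y‖ ^ (-s)) (d • y)) := by
    simp_rw [hcomp]
    exact (near_base hs0 hs2).const_mul _
  have hint : Integrable ((closedBall (0:E2) d).indicator fun y => ‖y‖ ^ (-s)) :=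
    (integrable_comp_smul_iff volume _ hd.ne').mp hint1
  refine ⟨hint, ?_⟩
  have h0 := Measure.integral_comp_smul (volume : Measure E2)
    ((closedBall (0:E2) d).indicator fun y => ‖y‖ ^ (-s)) d
  rw [finrank_E2] at h0
  simp_rw [hcomp] at h0
  rw [integral_const_mul] at h0
  have habs : |((d:ℝ) ^ 2)⁻¹| = (d ^ 2)⁻¹ := abs_of_pos (by positivity)
  rw [habs, smul_eq_mul] at h0
  have hd2 : ((d:ℝ) ^ 2) ≠ 0 := by positivity
  have hgoal : (∫ y, (closedBall (0:E2) d).indicator (fun y => ‖y‖ ^ (-s)) y)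
      = d ^ 2 * (d ^ (-s) * ∫ y, (closedBall (0:E2) 1).indicator (fun y => ‖y‖ ^ (-s)) y) := by
    field_simp at h0 ⊢
    linarith [h0]
  rw [hgoal, ← mul_assoc]
  congr 1
  rw [← Real.rpow_natCast d 2, ← Real.rpow_add hd]
  congr 1

/-- scaling for the far part -/
lemma far_scaled {t : ℝ} (ht : 2 < t) {d : ℝ} (hd : 0 < d) :
    Integrable (((closedBall (0:E2) d)ᶜ).indicator fun y => ‖y‖ ^ (-t)) ∧
    (∫ y, ((closedBall (0:E2) d)ᶜ).indicator (fun y => ‖y‖ ^ (-t)) y)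
      = d ^ (2 - t) * ∫ y, ((closedBall (0:E2) 1)ᶜ).indicator (fun y => ‖y‖ ^ (-t)) y := by
  have hcomp : ∀ y : E2, ((closedBall (0:E2) d)ᶜ).indicator (fun y => ‖y‖ ^ (-t)) (d • y)
      = d ^ (-t) * ((closedBall (0:E2) 1)ᶜ).indicator (fun y => ‖y‖ ^ (-t)) y := by
    intro y
    have hnorm : ‖d • y‖ = d * ‖y‖ := by
      rw [norm_smul, Real.norm_eq_abs, abs_of_pos hd]
    have hmem : d • y ∈ (closedBall (0:E2) d)ᶜ ↔ y ∈ (closedBall (0:E2) 1)ᶜ := by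
      simp only [mem_compl_iff, mem_closedBall_zero_iff, hnorm]
      constructor
      · intro h h'; exact h (by nlinarith)
      · intro h h'; exact h (by nlinarith)
    by_cases hy : y ∈ (closedBall (0:E2) 1)ᶜ
    · rw [Set.indicator_of_mem (hmem.mpr hy), Set.indicator_of_mem hy, hnorm,
        Real.mul_rpow hd.le (norm_nonneg _)]
    · rw [Set.indicator_of_notMem (fun h => hy (hmem.mp h)), Set.indicator_of_notMem hy,
        mul_zero]
  have hint1 : Integrable (fun y : E2 =>
      ((closedBall (0:E2) d)ᶜ).indicator (fun y => ‖y‖ ^ (-t)) (d • y)) := by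
    simp_rw [hcomp]
    exact (far_base ht).const_mul _
  have hint : Integrable (((closedBall (0:E2) d)ᶜ).indicator fun y => ‖y‖ ^ (-t)) :=
    (integrable_comp_smul_iff volume _ hd.ne').mp hint1
  refine ⟨hint, ?_⟩
  have h0 := Measure.integral_comp_smul (volume : Measure E2)
    (((closedBall (0:E2) d)ᶜ).indicator fun y => ‖y‖ ^ (-t)) d
  rw [finrank_E2] at h0
  simp_rw [hcomp] at h0
  rw [integral_const_mul] at h0
  have habs : |((d:ℝ) ^ 2)⁻¹| = (d ^ 2)⁻¹ := abs_of_pos (by positivity)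
  rw [habs, smul_eq_mul] at h0
  have hd2 : ((d:ℝ) ^ 2) ≠ 0 := by positivity
  have hgoal : (∫ y, ((closedBall (0:E2) d)ᶜ).indicator (fun y => ‖y‖ ^ (-t)) y)
      = d ^ 2 * (d ^ (-t) * ∫ y, ((closedBall (0:E2) 1)ᶜ).indicator (fun y => ‖y‖ ^ (-t)) y) := by
    field_simp at h0 ⊢
    linarith [h0]
  rw [hgoal, ← mul_assoc]
  congr 1
  rw [← Real.rpow_natCast d 2, ← Real.rpow_add hd]
  congr 1

/-- translated near part -/
lemma near_tr {s : ℝ} (hs0 : 0 < s) (hs2 : s < 2) {d : ℝ} (hd : 0 < d) (a : E2) :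
    Integrable ((closedBall a d).indicator fun x => ‖x - a‖ ^ (-s)) ∧
    (∫ x, (closedBall a d).indicator (fun x => ‖x - a‖ ^ (-s)) x)
      = d ^ (2 - s) * ∫ y, (closedBall (0:E2) 1).indicator (fun y => ‖y‖ ^ (-s)) y := by
  have heq : ∀ x : E2, (closedBall a d).indicator (fun x => ‖x - a‖ ^ (-s)) x
      = (closedBall (0:E2) d).indicator (fun y => ‖y‖ ^ (-s)) (x - a) := by
    intro x
    by_cases hx : x ∈ closedBall a d
    · rw [Set.indicator_of_mem hx, Set.indicator_of_mem
        (by rwa [mem_closedBall_zero_iff, ← dist_eq_norm, ← mem_closedBall])]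
    · rw [Set.indicator_of_notMem hx, Set.indicator_of_notMem
        (by rwa [mem_closedBall_zero_iff, ← dist_eq_norm, ← mem_closedBall])]
  obtain ⟨hint, hval⟩ := near_scaled hs0 hs2 hd
  constructor
  · refine (hint.comp_sub_right a).congr (Filter.Eventually.of_forall fun x => ?_)
    rw [heq]
  · rw [show (fun x : E2 => (closedBall a d).indicator (fun x => ‖x - a‖ ^ (-s)) x)
        = fun x : E2 => (closedBall (0:E2) d).indicator (fun y => ‖y‖ ^ (-s)) (x - a) from
        funext heq]
    rw [integral_sub_right_eq_self ((closedBall (0:E2) d).indicator fun y => ‖y‖ ^ (-s)) a]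
    exact hval

/-- translated far part -/
lemma far_tr {t : ℝ} (ht : 2 < t) {d : ℝ} (hd : 0 < d) (a : E2) :
    Integrable (((closedBall a d)ᶜ).indicator fun x => ‖x - a‖ ^ (-t)) ∧
    (∫ x, ((closedBall a d)ᶜ).indicator (fun x => ‖x - a‖ ^ (-t)) x)
      = d ^ (2 - t) * ∫ y, ((closedBall (0:E2) 1)ᶜ).indicator (fun y => ‖y‖ ^ (-t)) y := by
  have heq : ∀ x : E2, ((closedBall a d)ᶜ).indicator (fun x => ‖x - a‖ ^ (-t)) x
      = ((closedBall (0:E2) d)ᶜ).indicator (fun y => ‖y‖ ^ (-t)) (x - a) := by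
    intro x
    have hm : x - a ∈ (closedBall (0:E2) d)ᶜ ↔ x ∈ (closedBall a d)ᶜ := by
      simp [mem_closedBall_zero_iff, mem_closedBall, dist_eq_norm]
    by_cases hx : x ∈ (closedBall a d)ᶜ
    · rw [Set.indicator_of_mem hx, Set.indicator_of_mem (hm.mpr hx)]
    · rw [Set.indicator_of_notMem hx, Set.indicator_of_notMem (fun h => hx (hm.mp h))]
  obtain ⟨hint, hval⟩ := far_scaled ht hd
  constructor
  · refine (hint.comp_sub_right a).congr (Filter.Eventually.of_forall fun x => ?_)
    rw [heq]
  · rw [show (fun x : E2 => ((closedBall a d)ᶜ).indicator (fun x => ‖x - a‖ ^ (-t)) x)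
        = fun x : E2 => ((closedBall (0:E2) d)ᶜ).indicator (fun y => ‖y‖ ^ (-t)) (x - a) from
        funext heq]
    rw [integral_sub_right_eq_self (((closedBall (0:E2) d)ᶜ).indicator fun y => ‖y‖ ^ (-t)) a]
    exact hval

/-- The key norm identity. -/
lemma key_norm_eq {F : Type*} [NormedAddCommGroup F] [InnerProductSpace ℝ F]
    {u v : F} (hu : u ≠ 0) (hv : v ≠ 0) :
    ‖(‖u‖ ^ 2)⁻¹ • u - (‖v‖ ^ 2)⁻¹ • v‖ = ‖u - v‖ * (‖u‖⁻¹ * ‖v‖⁻¹) := by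
  have hu' : (0:ℝ) < ‖u‖ := norm_pos_iff.mpr hu
  have hv' : (0:ℝ) < ‖v‖ := norm_pos_iff.mpr hv
  have hsq : ‖(‖u‖ ^ 2)⁻¹ • u - (‖v‖ ^ 2)⁻¹ • v‖ ^ 2
      = (‖u - v‖ * (‖u‖⁻¹ * ‖v‖⁻¹)) ^ 2 := by
    rw [@norm_sub_sq_real F, mul_pow, @norm_sub_sq_real F]
    rw [norm_smul, norm_smul, real_inner_smul_left, real_inner_smul_right]
    simp only [Real.norm_eq_abs, abs_of_pos (by positivity : (0:ℝ) < (‖u‖^2)⁻¹),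
      abs_of_pos (by positivity : (0:ℝ) < (‖v‖^2)⁻¹)]
    field_simp
    ring
  have h1 : (0:ℝ) ≤ ‖(‖u‖ ^ 2)⁻¹ • u - (‖v‖ ^ 2)⁻¹ • v‖ := norm_nonneg _
  have h2 : (0:ℝ) ≤ ‖u - v‖ * (‖u‖⁻¹ * ‖v‖⁻¹) := by positivity
  nlinarith [hsq, h1, h2]


/-- one-sided pointwise bound -/
lemma half_bound {p d : ℝ} (hp0 : 0 < p) (hd : 0 < d) {a b x : E2}
    (hd' : d = ‖a - b‖) (hxa : x ≠ a) (hle : ‖x - a‖ ≤ ‖x - b‖) :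
    ‖x - a‖ ^ (-p) * ‖x - b‖ ^ (-p)
      ≤ (2/d) ^ p * (closedBall a d).indicator (fun x => ‖x - a‖ ^ (-p)) x
        + ((closedBall a d)ᶜ).indicator (fun x => ‖x - a‖ ^ (-(2*p))) x := by
  have hxa' : (0:ℝ) < ‖x - a‖ := norm_pos_iff.mpr (sub_ne_zero.mpr hxa)
  have hxb' : (0:ℝ) < ‖x - b‖ := lt_of_lt_of_le hxa' hle
  have htri : d ≤ ‖x - a‖ + ‖x - b‖ := by
    have h1 : a - b = (a - x) + (x - b) := by abel
    have h2 : ‖a - b‖ ≤ ‖a - x‖ + ‖x - b‖ := by rw [h1]; exact norm_add_le _ _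
    rw [norm_sub_rev a x] at h2
    linarith [hd' ▸ h2]
  have hb2 : d / 2 ≤ ‖x - b‖ := by linarith
  rcases le_or_gt ‖x - a‖ d with h | h
  · have hmem : x ∈ closedBall a d := by rwa [mem_closedBall, dist_eq_norm]
    rw [Set.indicator_of_mem hmem]
    have h1 : ‖x - b‖ ^ (-p) ≤ (d/2) ^ (-p) :=
      Real.rpow_le_rpow_of_nonpos (by linarith) hb2 (by linarith)
    have h2 : (d/2:ℝ) ^ (-p) = (2/d) ^ p := by
      rw [Real.rpow_neg (by positivity), ← Real.inv_rpow (by positivity), inv_div]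
    have h3 : ‖x - a‖ ^ (-p) * ‖x - b‖ ^ (-p) ≤ ‖x - a‖ ^ (-p) * (d/2) ^ (-p) :=
      mul_le_mul_of_nonneg_left h1 (Real.rpow_nonneg (norm_nonneg _) _)
    have h4 : ((closedBall a d)ᶜ).indicator (fun x => ‖x - a‖ ^ (-(2*p))) x ≥ 0 :=
      Set.indicator_nonneg (fun y _ => Real.rpow_nonneg (norm_nonneg _) _) _
    calc ‖x - a‖ ^ (-p) * ‖x - b‖ ^ (-p) ≤ ‖x - a‖ ^ (-p) * (d/2) ^ (-p) := h3
      _ = (2/d) ^ p * ‖x - a‖ ^ (-p) := by rw [h2]; ring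
      _ ≤ _ := le_add_of_nonneg_right h4
  · have hmem : x ∈ (closedBall a d)ᶜ := by
      simp only [mem_compl_iff, mem_closedBall, dist_eq_norm, not_le]
      exact h
    rw [Set.indicator_of_mem hmem]
    have h1 : ‖x - b‖ ^ (-p) ≤ ‖x - a‖ ^ (-p) :=
      Real.rpow_le_rpow_of_nonpos hxa' hle (by linarith)
    have h2 : ‖x - a‖ ^ (-p) * ‖x - a‖ ^ (-p) = ‖x - a‖ ^ (-(2*p)) := by
      rw [← Real.rpow_add hxa']; congr 1; ring
    have h4 : (0:ℝ) ≤ (2/d) ^ p * (closedBall a d).indicator (fun x => ‖x - a‖ ^ (-p)) x :=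
      mul_nonneg (Real.rpow_nonneg (by positivity) _)
        (Set.indicator_nonneg (fun y _ => Real.rpow_nonneg (norm_nonneg _) _) _)
    calc ‖x - a‖ ^ (-p) * ‖x - b‖ ^ (-p) ≤ ‖x - a‖ ^ (-p) * ‖x - a‖ ^ (-p) :=
          mul_le_mul_of_nonneg_left h1 (Real.rpow_nonneg (norm_nonneg _) _)
      _ = ‖x - a‖ ^ (-(2*p)) := h2
      _ ≤ _ := le_add_of_nonneg_left h4

end Stmt12Aux

open Stmt12Aux Metric Set in
theorem stmt12 (p : ℝ) (hp1 : 1 < p) (hp2 : p < 2)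
    (Ω : Set (EuclideanSpace ℝ (Fin 2))) (hΩo : IsOpen Ω) (hΩb : Bornology.IsBounded Ω) :
    ∃ C > 0, ∀ a ∈ Ω, ∀ b ∈ Ω, a ≠ b →
      (∫ x in Ω, ‖(‖x - a‖ ^ 2)⁻¹ • (x - a) - (‖x - b‖ ^ 2)⁻¹ • (x - b)‖ ^ p) ^ (1 / p)
        ≤ C * ‖a - b‖ ^ (2 / p - 1) := by
  have hp0 : (0:ℝ) < p := lt_trans zero_lt_one hp1
  set c1 : ℝ := ∫ y, (closedBall (0:E2) 1).indicator (fun y => ‖y‖ ^ (-p)) y with hc1def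
  set c2 : ℝ := ∫ y, ((closedBall (0:E2) 1)ᶜ).indicator (fun y => ‖y‖ ^ (-(2*p))) y with hc2def
  have hc1 : 0 ≤ c1 := integral_nonneg fun y =>
    Set.indicator_nonneg (fun y _ => Real.rpow_nonneg (norm_nonneg _) _) _
  have hc2 : 0 ≤ c2 := integral_nonneg fun y =>
    Set.indicator_nonneg (fun y _ => Real.rpow_nonneg (norm_nonneg _) _) _
  set K : ℝ := 2 ^ (p+1) * c1 + 2 * c2 with hKdef
  have hK : 0 ≤ K := by positivity
  refine ⟨K ^ (1/p) + 1, by positivity, ?_⟩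
  intro a ha b hb hab
  set d : ℝ := ‖a - b‖ with hd'
  have hd : 0 < d := norm_pos_iff.mpr (sub_ne_zero.mpr hab)
  obtain ⟨hia1, hva1⟩ := near_tr hp0 hp2 hd a
  obtain ⟨hib1, hvb1⟩ := near_tr hp0 hp2 hd b
  obtain ⟨hia2, hva2⟩ := far_tr (show (2:ℝ) < 2*p by linarith) hd a
  obtain ⟨hib2, hvb2⟩ := far_tr (show (2:ℝ) < 2*p by linarith) hd b
  set G : E2 → ℝ := fun x => d ^ p *
      ((2/d) ^ p * ((closedBall a d).indicator (fun x => ‖x - a‖ ^ (-p)) x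
          + (closedBall b d).indicator (fun x => ‖x - b‖ ^ (-p)) x)
        + (((closedBall a d)ᶜ).indicator (fun x => ‖x - a‖ ^ (-(2*p))) x
          + ((closedBall b d)ᶜ).indicator (fun x => ‖x - b‖ ^ (-(2*p))) x)) with hGdef
  have hGnn : ∀ x, 0 ≤ G x := by
    intro x
    have i1 := Set.indicator_nonneg (s := closedBall a d)
      (fun y (_ : y ∈ closedBall a d) => Real.rpow_nonneg (norm_nonneg (y - a)) (-p)) x
    have i2 := Set.indicator_nonneg (s := closedBall b d)
      (fun y (_ : y ∈ closedBall b d) => Real.rpow_nonneg (norm_nonneg (y - b)) (-p)) x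
    have i3 := Set.indicator_nonneg (s := (closedBall a d)ᶜ)
      (fun y (_ : y ∈ (closedBall a d)ᶜ) => Real.rpow_nonneg (norm_nonneg (y - a)) (-(2*p))) x
    have i4 := Set.indicator_nonneg (s := (closedBall b d)ᶜ)
      (fun y (_ : y ∈ (closedBall b d)ᶜ) => Real.rpow_nonneg (norm_nonneg (y - b)) (-(2*p))) x
    have h2d : (0:ℝ) ≤ (2/d) ^ p := Real.rpow_nonneg (by positivity) _
    have hdp : (0:ℝ) ≤ d ^ p := Real.rpow_nonneg hd.le _
    positivity
  have hGint : Integrable G := by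
    exact ((((hia1.add hib1).const_mul _).add (hia2.add hib2)).const_mul _)
  -- pointwise bound off {a, b}
  have hptwise : ∀ x : E2, x ≠ a → x ≠ b →
      ‖(‖x - a‖ ^ 2)⁻¹ • (x - a) - (‖x - b‖ ^ 2)⁻¹ • (x - b)‖ ^ p ≤ G x := by
    intro x hxa hxb
    have hua : x - a ≠ 0 := sub_ne_zero.mpr hxa
    have hub : x - b ≠ 0 := sub_ne_zero.mpr hxb
    have hna : (0:ℝ) < ‖x - a‖ := norm_pos_iff.mpr hua
    have hnb : (0:ℝ) < ‖x - b‖ := norm_pos_iff.mpr hub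
    have hkey := key_norm_eq hua hub
    have hd2 : (x - a) - (x - b) = b - a := by abel
    rw [hd2, norm_sub_rev b a] at hkey
    have hfx : ‖(‖x - a‖ ^ 2)⁻¹ • (x - a) - (‖x - b‖ ^ 2)⁻¹ • (x - b)‖ ^ p
        = d ^ p * (‖x - a‖ ^ (-p) * ‖x - b‖ ^ (-p)) := by
      rw [hkey, Real.mul_rpow hd.le (by positivity),
        Real.mul_rpow (by positivity) (by positivity),
        Real.inv_rpow hna.le, Real.inv_rpow hnb.le,
        ← Real.rpow_neg hna.le, ← Real.rpow_neg hnb.le]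
    rw [hfx, hGdef]
    refine mul_le_mul_of_nonneg_left ?_ (Real.rpow_nonneg hd.le _)
    have i1 := Set.indicator_nonneg (s := closedBall a d)
      (fun y (_ : y ∈ closedBall a d) => Real.rpow_nonneg (norm_nonneg (y - a)) (-p)) x
    have i2 := Set.indicator_nonneg (s := closedBall b d)
      (fun y (_ : y ∈ closedBall b d) => Real.rpow_nonneg (norm_nonneg (y - b)) (-p)) x
    have i3 := Set.indicator_nonneg (s := (closedBall a d)ᶜ)
      (fun y (_ : y ∈ (closedBall a d)ᶜ) => Real.rpow_nonneg (norm_nonneg (y - a)) (-(2*p))) x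
    have i4 := Set.indicator_nonneg (s := (closedBall b d)ᶜ)
      (fun y (_ : y ∈ (closedBall b d)ᶜ) => Real.rpow_nonneg (norm_nonneg (y - b)) (-(2*p))) x
    have h2d : (0:ℝ) ≤ (2/d) ^ p := Real.rpow_nonneg (by positivity) _
    rcases le_total ‖x - a‖ ‖x - b‖ with hle | hle
    · have hb1 := half_bound hp0 hd hd' hxa hle
      nlinarith [mul_nonneg h2d i2]
    · have hb2 := half_bound hp0 hd (by rw [hd', norm_sub_rev]) hxb hle
      have hcomm : ‖x - a‖ ^ (-p) * ‖x - b‖ ^ (-p) = ‖x - b‖ ^ (-p) * ‖x - a‖ ^ (-p) := by ring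
      rw [hcomm]
      nlinarith [mul_nonneg h2d i1]
  -- a.e. bound on Ω
  have hae : ∀ᵐ x ∂(volume.restrict Ω),
      ‖(‖x - a‖ ^ 2)⁻¹ • (x - a) - (‖x - b‖ ^ 2)⁻¹ • (x - b)‖ ^ p ≤ G x := by
    refine ae_restrict_of_ae ?_
    have hz : volume ({a, b} : Set E2) = 0 :=
      Set.Finite.measure_zero (Set.toFinite _) _
    have hset : {x : E2 | ¬ (x ≠ a ∧ x ≠ b)} = {a, b} := by
      ext x; simp [not_and_or, or_iff_not_imp_left]
    have hab' : ∀ᵐ x ∂(volume : Measure E2), x ≠ a ∧ x ≠ b := by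
      rw [ae_iff, hset]; exact hz
    filter_upwards [hab'] with x hx
    exact hptwise x hx.1 hx.2
  have hstep1 : (∫ x in Ω, ‖(‖x - a‖ ^ 2)⁻¹ • (x - a) - (‖x - b‖ ^ 2)⁻¹ • (x - b)‖ ^ p)
      ≤ ∫ x in Ω, G x :=
    integral_mono_of_nonneg
      (Filter.Eventually.of_forall fun x => Real.rpow_nonneg (norm_nonneg _) _)
      hGint.integrableOn hae
  have hstep2 : (∫ x in Ω, G x) ≤ ∫ x, G x :=
    setIntegral_le_integral hGint (Filter.Eventually.of_forall hGnn)
  have hGval : (∫ x, G x) = K * d ^ (2 - p) := by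
    have e1 : (∫ x, G x) = d ^ p *
        ((2/d) ^ p * ((∫ x, (closedBall a d).indicator (fun x => ‖x - a‖ ^ (-p)) x)
            + ∫ x, (closedBall b d).indicator (fun x => ‖x - b‖ ^ (-p)) x)
          + ((∫ x, ((closedBall a d)ᶜ).indicator (fun x => ‖x - a‖ ^ (-(2*p))) x)
            + ∫ x, ((closedBall b d)ᶜ).indicator (fun x => ‖x - b‖ ^ (-(2*p))) x)) := by
      rw [hGdef, integral_const_mul]
      have hI1 : Integrable (fun x : E2 => (2/d) ^ p *
          ((closedBall a d).indicator (fun x => ‖x - a‖ ^ (-p)) x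
            + (closedBall b d).indicator (fun x => ‖x - b‖ ^ (-p)) x)) volume :=
        (hia1.add hib1).const_mul _
      have hI2 : Integrable (fun x : E2 =>
          ((closedBall a d)ᶜ).indicator (fun x => ‖x - a‖ ^ (-(2*p))) x
            + ((closedBall b d)ᶜ).indicator (fun x => ‖x - b‖ ^ (-(2*p))) x) volume :=
        hia2.add hib2
      rw [integral_add hI1 hI2, integral_const_mul, integral_add hia1 hib1,
        integral_add hia2 hib2]
    rw [e1, hva1, hvb1, hva2, hvb2]
    have hdp : (0:ℝ) < d ^ p := Real.rpow_pos_of_pos hd p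
    have h21 : (2:ℝ) ^ (p+1) = 2 ^ p * 2 := by
      rw [Real.rpow_add (by norm_num), Real.rpow_one]
    have hdd : d ^ p * d ^ (2-2*p) = d ^ (2-p) := by
      rw [← Real.rpow_add hd]; congr 1; ring
    have hdiv : ((2:ℝ)/d) ^ p = 2 ^ p / d ^ p :=
      Real.div_rpow (by norm_num : (0:ℝ) ≤ 2) hd.le p
    rw [hdiv, hKdef, h21]
    rw [← hc1def, ← hc2def]
    field_simp
    nlinarith [hdd, hdp, show d ^ p * d ^ (2*(1-p)) = d ^ (2-p) by rw [← Real.rpow_add hd]; congr 1; ring]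
  have hint_nonneg : (0:ℝ) ≤ ∫ x in Ω,
      ‖(‖x - a‖ ^ 2)⁻¹ • (x - a) - (‖x - b‖ ^ 2)⁻¹ • (x - b)‖ ^ p :=
    integral_nonneg fun x => Real.rpow_nonneg (norm_nonneg _) _
  have hchain : (∫ x in Ω, ‖(‖x - a‖ ^ 2)⁻¹ • (x - a) - (‖x - b‖ ^ 2)⁻¹ • (x - b)‖ ^ p)
      ≤ K * d ^ (2 - p) := by
    calc _ ≤ ∫ x in Ω, G x := hstep1
      _ ≤ ∫ x, G x := hstep2
      _ = K * d ^ (2-p) := hGval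
  have hfinal : (∫ x in Ω, ‖(‖x - a‖ ^ 2)⁻¹ • (x - a) - (‖x - b‖ ^ 2)⁻¹ • (x - b)‖ ^ p) ^ (1/p)
      ≤ (K * d ^ (2-p)) ^ (1/p) :=
    Real.rpow_le_rpow hint_nonneg hchain (by positivity)
  have hexp : (2 - p) * (1/p) = 2/p - 1 := by field_simp
  have hrhs : (K * d ^ (2-p)) ^ (1/p) = K ^ (1/p) * d ^ (2/p - 1) := by
    rw [Real.mul_rpow hK (Real.rpow_nonneg hd.le _),
      ← Real.rpow_mul hd.le, hexp]
  refine le_trans hfinal ?_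
  rw [hrhs]
  have : d ^ (2/p - 1) ≥ 0 := Real.rpow_nonneg hd.le _
  nlinarith [this]
end
end

section
/- There exists a constant C > 0 such that for all a, b in the open unit disk of ℝ² ≅ ℂ, ( ∫₀^{2π} | ln|e^{iθ} − a| − ln|e^{iθ} − b| |² dθ )^{1/2} ≤ C · |a − b| / min(1 − |a|, 1 − |b|). -/
open MeasureTheory

noncomputable section

lemma log_diff_le_aux (x y : ℝ) (hx : 0 < x) (hy : 0 < y) (h : y ≤ x) :
    |Real.log x - Real.log y| ≤ |x - y| / min x y := by
  rw [abs_of_nonneg (sub_nonneg.2 (Real.log_le_log hy h)),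
    abs_of_nonneg (sub_nonneg.2 h), min_eq_right h, ← Real.log_div hx.ne' hy.ne']
  have h1 : Real.log (x / y) ≤ x / y - 1 := Real.log_le_sub_one_of_pos (div_pos hx hy)
  have h2 : x / y - 1 = (x - y) / y := by field_simp
  linarith

lemma log_diff_le (x y : ℝ) (hx : 0 < x) (hy : 0 < y) :
    |Real.log x - Real.log y| ≤ |x - y| / min x y := by
  rcases le_total y x with h | h
  · exact log_diff_le_aux x y hx hy h
  · rw [abs_sub_comm, abs_sub_comm x, min_comm]
    exact log_diff_le_aux y x hy hx h

theorem stmt13 :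
    ∃ C > 0, ∀ a b : ℂ, ‖a‖ < 1 → ‖b‖ < 1 →
      Real.sqrt (∫ θ in (0:ℝ)..(2 * Real.pi),
          |Real.log ‖Complex.exp (θ * Complex.I) - a‖
            - Real.log ‖Complex.exp (θ * Complex.I) - b‖| ^ 2)
        ≤ C * ‖a - b‖ / min (1 - ‖a‖) (1 - ‖b‖) := by
  refine ⟨Real.sqrt (2 * Real.pi), Real.sqrt_pos.2 (by positivity), ?_⟩
  intro a b ha hb
  set m := min (1 - ‖a‖) (1 - ‖b‖) with hm
  have hm0 : 0 < m := lt_min (by linarith) (by linarith)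
  set M := ‖a - b‖ / m with hM
  have hM0 : 0 ≤ M := div_nonneg (norm_nonneg _) hm0.le
  -- pointwise estimate
  have key : ∀ θ : ℝ,
      |Real.log (‖Complex.exp (θ * Complex.I) - a‖)
        - Real.log (‖Complex.exp (θ * Complex.I) - b‖)| ^ 2 ≤ M ^ 2 := by
    intro θ
    have he : ‖Complex.exp (θ * Complex.I)‖ = 1 :=
      Complex.norm_exp_ofReal_mul_I θ
    set ra := ‖Complex.exp (θ * Complex.I) - a‖ with hra
    set rb := ‖Complex.exp (θ * Complex.I) - b‖ with hrb
    have hra0 : 1 - ‖a‖ ≤ ra := by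
      have := norm_sub_norm_le (Complex.exp (θ * Complex.I)) a
      rw [he] at this; linarith
    have hrb0 : 1 - ‖b‖ ≤ rb := by
      have := norm_sub_norm_le (Complex.exp (θ * Complex.I)) b
      rw [he] at this; linarith
    have hrap : 0 < ra := lt_of_lt_of_le (by linarith) hra0
    have hrbp : 0 < rb := lt_of_lt_of_le (by linarith) hrb0
    have hmin : m ≤ min ra rb :=
      le_min (le_trans (min_le_left _ _) hra0) (le_trans (min_le_right _ _) hrb0)
    have hnum : |ra - rb| ≤ ‖a - b‖ := by
      have h1 : |ra - rb| ≤ ‖(Complex.exp (θ * Complex.I) - a)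
          - (Complex.exp (θ * Complex.I) - b)‖ := by
        simpa using
          abs_norm_sub_norm_le (Complex.exp (θ * Complex.I) - a)
            (Complex.exp (θ * Complex.I) - b)
      have h2 : (Complex.exp (θ * Complex.I) - a) - (Complex.exp (θ * Complex.I) - b)
          = -(a - b) := by ring
      rw [h2, norm_neg] at h1
      exact h1
    have hlog : |Real.log ra - Real.log rb| ≤ M := by
      calc |Real.log ra - Real.log rb| ≤ |ra - rb| / min ra rb :=
            log_diff_le ra rb hrap hrbp
        _ ≤ ‖a - b‖ / m :=
            div_le_div₀ (norm_nonneg _) hnum hm0 hmin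
    exact pow_le_pow_left₀ (abs_nonneg _) hlog 2
  -- continuity / integrability
  have hcont : Continuous (fun θ : ℝ =>
      |Real.log (‖Complex.exp (θ * Complex.I) - a‖)
        - Real.log (‖Complex.exp (θ * Complex.I) - b‖)| ^ 2) := by
    have hc : ∀ c : ℂ, ‖c‖ < 1 → Continuous (fun θ : ℝ =>
        Real.log (‖Complex.exp (θ * Complex.I) - c‖)) := by
      intro c hc
      apply Continuous.log
      · exact continuous_norm.comp
          ((Complex.continuous_exp.comp (by continuity)).sub continuous_const)
      · intro θ
        have he : ‖Complex.exp (θ * Complex.I)‖ = 1 :=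
          Complex.norm_exp_ofReal_mul_I θ
        have := norm_sub_norm_le (Complex.exp (θ * Complex.I)) c
        rw [he] at this
        have : 0 < ‖Complex.exp (θ * Complex.I) - c‖ := by linarith
        exact this.ne'
    exact (((hc a ha).sub (hc b hb)).abs).pow 2
  have hint : IntervalIntegrable (fun θ : ℝ =>
      |Real.log (‖Complex.exp (θ * Complex.I) - a‖)
        - Real.log (‖Complex.exp (θ * Complex.I) - b‖)| ^ 2)
      volume 0 (2 * Real.pi) := hcont.intervalIntegrable _ _
  have hle : (∫ θ in (0:ℝ)..(2 * Real.pi),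
      |Real.log (‖Complex.exp (θ * Complex.I) - a‖)
        - Real.log (‖Complex.exp (θ * Complex.I) - b‖)| ^ 2)
      ≤ 2 * Real.pi * M ^ 2 := by
    have h2pi : (0:ℝ) ≤ 2 * Real.pi := by positivity
    calc (∫ θ in (0:ℝ)..(2 * Real.pi), _)
        ≤ ∫ _ in (0:ℝ)..(2 * Real.pi), M ^ 2 :=
          intervalIntegral.integral_mono_on h2pi hint (intervalIntegrable_const)
            (fun θ _ => key θ)
      _ = 2 * Real.pi * M ^ 2 := by
          rw [intervalIntegral.integral_const, smul_eq_mul, sub_zero]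
  calc Real.sqrt (∫ θ in (0:ℝ)..(2 * Real.pi),
        |Real.log (‖Complex.exp (θ * Complex.I) - a‖)
          - Real.log (‖Complex.exp (θ * Complex.I) - b‖)| ^ 2)
      ≤ Real.sqrt (2 * Real.pi * M ^ 2) := Real.sqrt_le_sqrt hle
    _ = Real.sqrt (2 * Real.pi) * M := by
        rw [Real.sqrt_mul (by positivity), Real.sqrt_sq hM0]
    _ = Real.sqrt (2 * Real.pi) * ‖a - b‖ / m := by
        rw [hM, mul_div_assoc]
end
end

section
/- Let N ≥ 2 be an integer, ρ > 0, and let a = (a₁,…,a_N) and b = (b₁,…,b_N) be N-tuples of points in ℝ² such that ‖a_j − a_k‖ ≥ ρ and ‖b_j − b_k‖ ≥ ρ for all j ≠ k. Then ∑_{1 ≤ j ≠ k ≤ N} ‖ (b_j − b_k)/‖b_j − b_k‖² − (a_j − a_k)/‖a_j − a_k‖² ‖ ≤ 2 N (N−1) · ρ^{−2} · max_{1 ≤ j ≤ N} ‖a_j − b_j‖. -/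
open Finset

lemma inv_map_dist {E : Type*} [NormedAddCommGroup E] [InnerProductSpace ℝ E]
    (x y : E) (hx : x ≠ 0) (hy : y ≠ 0) :
    ‖(‖y‖ ^ 2)⁻¹ • y - (‖x‖ ^ 2)⁻¹ • x‖ = ‖x - y‖ / (‖x‖ * ‖y‖) := by
  have hx' : ‖x‖ ≠ 0 := norm_ne_zero_iff.mpr hx
  have hy' : ‖y‖ ≠ 0 := norm_ne_zero_iff.mpr hy
  have h1 : ‖(‖y‖ ^ 2)⁻¹ • y - (‖x‖ ^ 2)⁻¹ • x‖ ^ 2 = (‖x - y‖ / (‖x‖ * ‖y‖)) ^ 2 := by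
    rw [@norm_sub_sq_real, div_pow, @norm_sub_sq_real]
    simp only [inner_smul_left, inner_smul_right, norm_smul, norm_inv, norm_pow,
      norm_norm, mul_pow, conj_trivial]
    rw [real_inner_comm y x]
    field_simp
  have hB : (0:ℝ) ≤ ‖x - y‖ / (‖x‖ * ‖y‖) := by positivity
  rw [← Real.sqrt_sq (norm_nonneg _), ← Real.sqrt_sq hB, h1]

theorem stmt18 (N : ℕ) (hN : 2 ≤ N) (ρ : ℝ) (hρ : 0 < ρ)
    (a b : Fin N → EuclideanSpace ℝ (Fin 2))
    (ha : ∀ j k : Fin N, j ≠ k → ρ ≤ ‖a j - a k‖)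
    (hb : ∀ j k : Fin N, j ≠ k → ρ ≤ ‖b j - b k‖) :
    ∑ j : Fin N, ∑ k : Fin N,
        (if j ≠ k then
          ‖(‖b j - b k‖ ^ 2)⁻¹ • (b j - b k) - (‖a j - a k‖ ^ 2)⁻¹ • (a j - a k)‖
        else 0)
      ≤ 2 * (N : ℝ) * ((N : ℝ) - 1) / ρ ^ 2 * ⨆ j : Fin N, ‖a j - b j‖ := by
  haveI : Nonempty (Fin N) := ⟨⟨0, by omega⟩⟩
  set M : ℝ := ⨆ j : Fin N, ‖a j - b j‖ with hM
  have hMle : ∀ j : Fin N, ‖a j - b j‖ ≤ M :=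
    fun j => le_ciSup (Set.Finite.bddAbove (Set.finite_range fun j => ‖a j - b j‖)) j
  have hM0 : 0 ≤ M := le_trans (norm_nonneg _) (hMle (Classical.arbitrary _))
  set C : ℝ := 2 * M / ρ ^ 2 with hC
  have hterm : ∀ j k : Fin N,
      (if j ≠ k then
        ‖(‖b j - b k‖ ^ 2)⁻¹ • (b j - b k) - (‖a j - a k‖ ^ 2)⁻¹ • (a j - a k)‖
      else 0) ≤ if j ≠ k then C else 0 := by
    intro j k
    split_ifs with h
    · have hax : ρ ≤ ‖a j - a k‖ := ha j k h
      have hbx : ρ ≤ ‖b j - b k‖ := hb j k h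
      have hxne : a j - a k ≠ 0 := by
        intro h0; rw [h0, norm_zero] at hax; linarith
      have hyne : b j - b k ≠ 0 := by
        intro h0; rw [h0, norm_zero] at hbx; linarith
      rw [inv_map_dist _ _ hxne hyne]
      have hnum : ‖(a j - a k) - (b j - b k)‖ ≤ 2 * M := by
        have : (a j - a k) - (b j - b k) = (a j - b j) - (a k - b k) := by abel
        rw [this]
        calc ‖(a j - b j) - (a k - b k)‖ ≤ ‖a j - b j‖ + ‖a k - b k‖ := norm_sub_le _ _
          _ ≤ M + M := add_le_add (hMle j) (hMle k)
          _ = 2 * M := by ring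
      have hden : ρ ^ 2 ≤ ‖a j - a k‖ * ‖b j - b k‖ := by
        rw [sq]; exact mul_le_mul hax hbx hρ.le (norm_nonneg _)
      rw [hC]
      apply div_le_div₀ (by positivity) hnum (by positivity) hden
    · exact le_refl 0
  calc ∑ j : Fin N, ∑ k : Fin N,
        (if j ≠ k then
          ‖(‖b j - b k‖ ^ 2)⁻¹ • (b j - b k) - (‖a j - a k‖ ^ 2)⁻¹ • (a j - a k)‖
        else 0)
      ≤ ∑ j : Fin N, ∑ k : Fin N, (if j ≠ k then C else 0) :=
        Finset.sum_le_sum fun j _ => Finset.sum_le_sum fun k _ => hterm j k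
    _ = ∑ j : Fin N, ((N : ℝ) - 1) * C := by
        refine Finset.sum_congr rfl fun j _ => ?_
        have : ∀ k : Fin N, (if j ≠ k then C else 0) = C - (if j = k then C else 0) := by
          intro k; by_cases h : j = k <;> simp [h]
        simp [this, Finset.sum_sub_distrib, Finset.sum_ite_eq, Finset.card_univ]
        ring
    _ = 2 * (N : ℝ) * ((N : ℝ) - 1) / ρ ^ 2 * M := by
        rw [Finset.sum_const, Finset.card_univ, Fintype.card_fin, hC]
        ring
end
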